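/- arXiv:2005.04194 — 6 statements merged into one kernel-verified Lean document; each statement's English description precedes it below -/
import Mathlib

section
/- (Lerch's formula) For every real number x with 0 < x ≤ 1, the derivative in s of the Hurwitz zeta function at s = 0 is given by (d/ds) H(x,s)|_{s=0} = log(Γ(x)/√(2π)), i.e. it equals log Γ(x) - (1/2)·log(2π), where Γ is Euler's Gamma function. -/
open HurwitzZeta

namespace LerchAux
open Complex Filter Topology Set


noncomputable def pc (y : ℝ) (s : ℂ) : ℂ := (y : ℂ) ^ (-s)
noncomputable def Pc (y : ℝ) (s : ℂ) : ℂ := (y : ℂ) ^ (1 - s) / (1 - s)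
noncomputable def term (x : ℝ) (n : ℕ) (s : ℂ) : ℂ :=
  pc (n + x) s / 2 + pc (n + 1 + x) s / 2 + Pc (n + x) s - Pc (n + 1 + x) s

lemma hasDerivAt_real_cpow {c : ℂ} {b h : ℝ} (hbh : 0 < b + h) :
    HasDerivAt (fun t : ℝ => ((b + t : ℝ) : ℂ) ^ c) (c * ((b + h : ℝ) : ℂ) ^ (c - 1)) h := by
  have h0 : ((b : ℂ) + (h : ℝ)) ∈ slitPlane := by
    rw [← Complex.ofReal_add]; exact Complex.ofReal_mem_slitPlane.2 hbh
  have h1 : HasDerivAt (fun z : ℂ => ((b : ℂ) + z) ^ c)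
      (c * ((b : ℂ) + (h : ℂ)) ^ (c - 1) * 1) ((h : ℝ) : ℂ) :=
    (((hasDerivAt_id ((h : ℝ) : ℂ)).const_add (b : ℂ)).cpow_const h0)
  have h2 := h1.comp_ofReal
  refine HasDerivAt.congr_deriv (h2.congr_of_eventuallyEq ?_) (by push_cast; ring)
  filter_upwards with t
  push_cast
  ring_nf

lemma norm_cpow_real {y : ℝ} (hy : 0 < y) (w : ℂ) : ‖(y : ℂ) ^ w‖ = y ^ w.re := by
  rw [Complex.norm_cpow_eq_rpow_re_of_pos hy]

/-- The key trapezoid estimate. -/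
lemma term_bound {x : ℝ} (hx : 0 < x) {s : ℂ} (hs : s ≠ 1) (hre : -2 ≤ s.re) (n : ℕ) :
    ‖term x n s‖ ≤ ‖s‖ * ‖s + 1‖ / 2 * ((n : ℝ) + x) ^ (-s.re - 2) := by
  set b : ℝ := (n : ℝ) + x with hb
  have hb0 : 0 < b := by positivity
  have hbh : ∀ h : ℝ, 0 ≤ h → 0 < b + h := fun h hh => by linarith
  have h1s : (1 : ℂ) - s ≠ 0 := sub_ne_zero.2 (Ne.symm hs)
  set M : ℝ := ‖s‖ * ‖s + 1‖ / 2 * b ^ (-s.re - 2) with hM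
  have hM0 : 0 ≤ M := by positivity
  set φ : ℝ → ℂ := fun h => (h : ℂ) / 2 * (pc b s + pc (b + h) s) + Pc b s - Pc (b + h) s with hφ
  set ψ : ℝ → ℂ := fun h =>
    (pc b s - pc (b + h) s) / 2 - s * (h : ℂ) / 2 * ((b + h : ℝ) : ℂ) ^ (-s - 1) with hψ
  set χ : ℝ → ℂ := fun h =>
    s * (s + 1) * (h : ℂ) / 2 * ((b + h : ℝ) : ℂ) ^ (-s - 2) with hχ
  have hd1 : ∀ h ∈ Icc (0:ℝ) 1,
      HasDerivAt (fun t : ℝ => pc (b + t) s) (-s * ((b + h : ℝ) : ℂ) ^ (-s - 1)) h := by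
    intro h hh
    have := hasDerivAt_real_cpow (c := -s) (hbh h hh.1)
    simp only [pc]
    exact this
  have hφd : ∀ h ∈ Icc (0:ℝ) 1, HasDerivAt φ (ψ h) h := by
    intro h hh
    have hp : 0 < b + h := hbh h hh.1
    have d2 : HasDerivAt (fun t : ℝ => Pc (b + t) s) (pc (b + h) s) h := by
      have := (hasDerivAt_real_cpow (c := 1 - s) hp).div_const (1 - s)
      have e : (1 - s) * ((b + h : ℝ) : ℂ) ^ (1 - s - 1) / (1 - s) = pc (b + h) s := by
        rw [show (1:ℂ) - s - 1 = -s by ring, ← pc]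
        exact mul_div_cancel_left₀ _ h1s
      simp only [Pc]
      rw [← e]
      exact this
    have d3 : HasDerivAt (fun t : ℝ => (t : ℂ) / 2) (1 / 2) h := by
      simpa using (Complex.ofRealCLM.hasDerivAt (x := h)).div_const 2
    have d4 : HasDerivAt (fun t : ℝ => pc b s + pc (b + t) s)
        (-s * ((b + h : ℝ) : ℂ) ^ (-s - 1)) h := by
      simpa using (hd1 h hh).const_add (pc b s)
    have := ((d3.mul d4).add (hasDerivAt_const h (Pc b s))).sub d2
    have heq : HasDerivAt (fun t : ℝ => (t:ℂ)/2 * (pc b s + pc (b+t) s) + Pc b s - Pc (b+t) s)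
        (1 / 2 * (pc b s + pc (b + h) s) + (h:ℂ)/2 * (-s * ((b + h : ℝ) : ℂ) ^ (-s - 1)) + 0
          - pc (b + h) s) h := this
    refine HasDerivAt.congr_deriv heq ?_
    simp only [hψ]
    ring
  have hψd : ∀ h ∈ Icc (0:ℝ) 1, HasDerivAt ψ (χ h) h := by
    intro h hh
    have hp : 0 < b + h := hbh h hh.1
    have d5 : HasDerivAt (fun t : ℝ => ((b + t : ℝ) : ℂ) ^ (-s - 1))
        ((-s - 1) * ((b + h : ℝ) : ℂ) ^ (-s - 2)) h := by
      have := hasDerivAt_real_cpow (c := -s - 1) hp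
      convert this using 2
      ring
    have d3 : HasDerivAt (fun t : ℝ => s * (t : ℂ) / 2) (s / 2) h := by
      have := ((Complex.ofRealCLM.hasDerivAt (x := h)).const_mul s).div_const 2
      simp only [mul_div_assoc] at this ⊢
      exact this.congr_deriv (by simp [div_eq_mul_inv])
    have := (((hasDerivAt_const h (pc b s)).sub (hd1 h hh)).div_const 2).sub (d3.mul d5)
    refine HasDerivAt.congr_deriv this ?_
    simp only [hχ]
    ring
  have hψ0 : ψ 0 = 0 := by simp [hψ]
  have hφ0 : φ 0 = 0 := by simp [hφ]
  have hχbound : ∀ h ∈ Ico (0:ℝ) 1, ‖χ h‖ ≤ M := by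
    intro h hh
    have hp : 0 < b + h := hbh h hh.1
    have : ‖χ h‖ = ‖s‖ * ‖s + 1‖ * h / 2 * (b + h) ^ (-s.re - 2) := by
      simp only [hχ]
      rw [norm_mul, norm_div, norm_mul, norm_mul, norm_cpow_real hp]
      rw [show (-s - 2).re = -s.re - 2 by simp]
      rw [Complex.norm_real, Real.norm_eq_abs, _root_.abs_of_nonneg hh.1]
      norm_num
    rw [this, hM]
    have h1 : (b + h) ^ (-s.re - 2) ≤ b ^ (-s.re - 2) :=
      Real.rpow_le_rpow_of_nonpos hb0 (by linarith [hh.1]) (by linarith)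
    have h2 : ‖s‖ * ‖s + 1‖ * h / 2 ≤ ‖s‖ * ‖s + 1‖ / 2 := by
      have := hh.2.le
      have h0 := hh.1
      have : ‖s‖ * ‖s + 1‖ * h ≤ ‖s‖ * ‖s + 1‖ * 1 := by
        apply mul_le_mul_of_nonneg_left hh.2.le (by positivity)
      linarith
    calc ‖s‖ * ‖s + 1‖ * h / 2 * (b + h) ^ (-s.re - 2)
        ≤ ‖s‖ * ‖s + 1‖ / 2 * (b + h) ^ (-s.re - 2) := by
          apply mul_le_mul_of_nonneg_right h2 (by positivity)
      _ ≤ ‖s‖ * ‖s + 1‖ / 2 * b ^ (-s.re - 2) := by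
          apply mul_le_mul_of_nonneg_left h1 (by positivity)
  -- first MVT: ‖ψ h‖ ≤ M * h
  have step1 := norm_image_sub_le_of_norm_deriv_le_segment'
    (f := ψ) (f' := χ) (C := M) (fun h hh => (hψd h hh).hasDerivWithinAt) hχbound
  have hψbound : ∀ h ∈ Ico (0:ℝ) 1, ‖ψ h‖ ≤ M := by
    intro h hh
    have := step1 h (Ico_subset_Icc_self hh)
    rw [hψ0, sub_zero, sub_zero] at this
    calc ‖ψ h‖ ≤ M * h := this
      _ ≤ M * 1 := by apply mul_le_mul_of_nonneg_left hh.2.le hM0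
      _ = M := mul_one M
  have step2 := norm_image_sub_le_of_norm_deriv_le_segment'
    (f := φ) (f' := ψ) (C := M) (fun h hh => (hφd h hh).hasDerivWithinAt) hψbound
  have := step2 1 (right_mem_Icc.2 zero_le_one)
  rw [hφ0, sub_zero, sub_zero, mul_one] at this
  have hterm : term x n s = φ 1 := by
    simp only [term, hφ, hb]
    have e1 : (n : ℝ) + x + 1 = (n : ℝ) + 1 + x := by ring
    rw [e1]
    push_cast
    ring
  rw [hterm]
  exact this


lemma summable_shift {x : ℝ} (hx : 0 < x) {q : ℝ} (hq : 1 < q) :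
    Summable (fun n : ℕ => ((n : ℝ) + x) ^ (-q)) := by
  rw [← summable_nat_add_iff 1]
  have h0 : Summable (fun n : ℕ => ((n : ℝ) + 1) ^ (-q)) := by
    have := (Real.summable_nat_rpow (p := -q)).2 (by linarith)
    rw [← summable_nat_add_iff 1] at this
    simpa using this
  apply h0.of_nonneg_of_le (fun n => by positivity)
  intro n
  apply Real.rpow_le_rpow_of_nonpos (by positivity) (by push_cast; linarith) (by linarith)

/-- the domain -/
def U : Set ℂ := {s : ℂ | -1 < s.re ∧ s ≠ 1}

lemma isOpen_U : IsOpen U := by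
  have : U = (Complex.re ⁻¹' Ioi (-1)) ∩ {(1 : ℂ)}ᶜ := by
    ext s; simp [U, Set.mem_Ioi, and_comm]
  rw [this]
  exact (isOpen_Ioi.preimage Complex.continuous_re).inter isOpen_compl_singleton

lemma isPreconnected_U : IsPreconnected U := by
  set A : Set ℂ := {s | -1 < s.re ∧ s.re < 1} with hA
  set B : Set ℂ := {s | -1 < s.re ∧ 0 < s.im} with hB
  set B' : Set ℂ := {s | -1 < s.re ∧ s.im < 0} with hB'
  set C : Set ℂ := {s | 1 < s.re} with hC
  have cA : Convex ℝ A := by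
    have : A = Complex.reLm ⁻¹' (Ioo (-1) 1) := by ext s; simp [hA, Set.mem_Ioo]
    rw [this]; exact (convex_Ioo _ _).linear_preimage _
  have cB : Convex ℝ B := by
    have : B = Complex.reLm ⁻¹' (Ioi (-1)) ∩ Complex.imLm ⁻¹' (Ioi 0) := by
      ext s; simp [hB, Set.mem_Ioi]
    rw [this]
    exact ((convex_Ioi _).linear_preimage _).inter ((convex_Ioi _).linear_preimage _)
  have cB' : Convex ℝ B' := by
    have : B' = Complex.reLm ⁻¹' (Ioi (-1)) ∩ Complex.imLm ⁻¹' (Iio 0) := by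
      ext s; simp [hB', Set.mem_Ioi, Set.mem_Iio]
    rw [this]
    exact ((convex_Ioi _).linear_preimage _).inter ((convex_Iio _).linear_preimage _)
  have cC : Convex ℝ C := by
    have : C = Complex.reLm ⁻¹' (Ioi 1) := by ext s; simp [hC, Set.mem_Ioi]
    rw [this]; exact (convex_Ioi _).linear_preimage _
  have p1 : IsPreconnected (A ∪ B) := by
    refine IsPreconnected.union Complex.I ?_ ?_ cA.isPreconnected cB.isPreconnected
    · show -1 < Complex.I.re ∧ Complex.I.re < 1
      norm_num
    · show -1 < Complex.I.re ∧ 0 < Complex.I.im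
      norm_num
  have p2 : IsPreconnected (A ∪ B ∪ B') := by
    refine IsPreconnected.union (-Complex.I) (Or.inl ?_) ?_ p1 cB'.isPreconnected
    · show -1 < (-Complex.I).re ∧ (-Complex.I).re < 1
      norm_num
    · show -1 < (-Complex.I).re ∧ (-Complex.I).im < 0
      norm_num
  have p3 : IsPreconnected (A ∪ B ∪ B' ∪ C) := by
    refine IsPreconnected.union (2 + Complex.I) (Or.inl (Or.inr ?_)) ?_ p2 cC.isPreconnected
    · show -1 < (2 + Complex.I).re ∧ 0 < (2 + Complex.I).im
      norm_num
    · show 1 < (2 + Complex.I).re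
      norm_num
  have hUeq : U = A ∪ B ∪ B' ∪ C := by
    ext s
    simp only [U, hA, hB, hB', hC, Set.mem_union, Set.mem_setOf_eq]
    constructor
    · rintro ⟨h1, h2⟩
      rcases lt_trichotomy s.im 0 with him | him | him
      · exact Or.inl (Or.inr ⟨h1, him⟩)
      · rcases lt_trichotomy s.re 1 with hre | hre | hre
        · exact Or.inl (Or.inl (Or.inl ⟨h1, hre⟩))
        · refine absurd ?_ h2
          apply Complex.ext
          · rw [hre]; simp
          · rw [him]; simp
        · exact Or.inr hre
      · exact Or.inl (Or.inl (Or.inr ⟨h1, him⟩))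
    · rintro (((⟨h1, h2⟩ | ⟨h1, h2⟩) | ⟨h1, h2⟩) | h1)
      · exact ⟨h1, fun he => by rw [he] at h2; simp at h2⟩
      · exact ⟨h1, fun he => by rw [he] at h2; simp at h2⟩
      · exact ⟨h1, fun he => by rw [he] at h2; simp at h2⟩
      · refine ⟨by linarith, fun he => by rw [he] at h1; simp at h1⟩
  rw [hUeq]
  exact p3


/-- derivative of `pc y` in `s` -/
lemma hasDerivAt_pc {y : ℝ} (hy : 0 < y) (s : ℂ) :
    HasDerivAt (pc y) (-(Real.log y : ℂ) * pc y s) s := by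
  have h1 : HasDerivAt (fun s : ℂ => -s) (-1) s := (hasDerivAt_id s).neg
  have h2 := h1.const_cpow (c := (y : ℂ)) (Or.inl (by exact_mod_cast hy.ne'))
  refine HasDerivAt.congr_deriv h2 ?_
  rw [← Complex.ofReal_log hy.le, ← pc]
  ring

lemma hasDerivAt_Pc {y : ℝ} (hy : 0 < y) {s : ℂ} (hs : s ≠ 1) :
    HasDerivAt (Pc y)
      ((-(Real.log y : ℂ) * (y:ℂ) ^ (1 - s) * (1 - s) + (y:ℂ) ^ (1 - s)) / (1 - s) ^ 2) s := by
  have h1s : (1 : ℂ) - s ≠ 0 := sub_ne_zero.2 (Ne.symm hs)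
  have h1 : HasDerivAt (fun s : ℂ => 1 - s) (-1) s := by
    simpa using (hasDerivAt_id s).const_sub (1:ℂ)
  have h2 := h1.const_cpow (c := (y : ℂ)) (Or.inl (by exact_mod_cast hy.ne'))
  have h3 := h2.div h1 h1s
  refine HasDerivAt.congr_deriv h3 ?_
  rw [← Complex.ofReal_log hy.le]
  ring

lemma differentiableAt_term {x : ℝ} (hx : 0 < x) (n : ℕ) {s : ℂ} (hs : s ≠ 1) :
    DifferentiableAt ℂ (term x n) s := by
  have h1 : (0:ℝ) < (n : ℝ) + x := by positivity
  have h2 : (0:ℝ) < (n : ℝ) + 1 + x := by positivity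
  exact ((((hasDerivAt_pc h1 s).differentiableAt.div_const 2).add
    (((hasDerivAt_pc h2 s).differentiableAt.div_const 2))).add
    (hasDerivAt_Pc h1 hs).differentiableAt).sub (hasDerivAt_Pc h2 hs).differentiableAt

/-- derivative of `term` at `s = 0`. -/
lemma hasDerivAt_term_zero {x : ℝ} (hx : 0 < x) (n : ℕ) :
    HasDerivAt (term x n)
      ((-(Real.log ((n:ℝ) + x)) / 2 - Real.log ((n:ℝ) + 1 + x) / 2
        + (((n:ℝ) + x) - ((n:ℝ) + x) * Real.log ((n:ℝ) + x))
        - (((n:ℝ) + 1 + x) - ((n:ℝ) + 1 + x) * Real.log ((n:ℝ) + 1 + x)) : ℝ) : ℂ) (0 : ℂ) := by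
  have h1 : (0:ℝ) < (n : ℝ) + x := by positivity
  have h2 : (0:ℝ) < (n : ℝ) + 1 + x := by positivity
  have d := ((((hasDerivAt_pc h1 0).div_const 2).add
    (((hasDerivAt_pc h2 0).div_const 2))).add
    (hasDerivAt_Pc h1 (by norm_num))).sub (hasDerivAt_Pc h2 (by norm_num))
  refine HasDerivAt.congr_deriv d ?_
  have e1 : pc ((n:ℝ) + x) 0 = 1 := by simp [pc]
  have e2 : pc ((n:ℝ) + 1 + x) 0 = 1 := by simp [pc]
  have e3 : (Complex.ofReal ((n:ℝ) + x)) ^ ((1:ℂ) - 0) = Complex.ofReal ((n:ℝ) + x) := by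
    rw [sub_zero, Complex.cpow_one]
  have e4 : (Complex.ofReal ((n:ℝ) + 1 + x)) ^ ((1:ℂ) - 0) = Complex.ofReal ((n:ℝ) + 1 + x) := by
    rw [sub_zero, Complex.cpow_one]
  rw [e1, e2, e3, e4]
  push_cast
  ring



noncomputable def G (x : ℝ) (s : ℂ) : ℂ := ∑' n : ℕ, term x n s

lemma summable_term {x : ℝ} (hx : 0 < x) {s : ℂ} (hs : s ≠ 1) (hre : -1 < s.re) :
    Summable (fun n : ℕ => term x n s) := by
  have hsum := (summable_shift hx (q := s.re + 2) (by linarith)).mul_left (‖s‖ * ‖s + 1‖ / 2)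
  apply Summable.of_norm_bounded hsum
  intro n
  have := term_bound hx hs (by linarith) n
  simpa [show -(s.re + 2) = -s.re - 2 by ring] using this

/-- The basic identity, for `1 < re s`. -/
lemma hurwitzZeta_eq {x : ℝ} (hx : 0 < x) (hx1 : x ≤ 1) {s : ℂ} (hs : 1 < s.re) :
    HurwitzZeta.hurwitzZeta (x : UnitAddCircle) s = G x s + pc x s / 2 - Pc x s := by
  have hs1 : s ≠ 1 := fun h => by rw [h] at hs; simp at hs
  have hH := HurwitzZeta.hasSum_hurwitzZeta_of_one_lt_re (a := x) ⟨hx.le, hx1⟩ hs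
  have hHf : HasSum (fun n : ℕ => pc ((n : ℝ) + x) s) (HurwitzZeta.hurwitzZeta (x : UnitAddCircle) s) := by
    refine hH.congr_fun fun n => ?_
    rw [pc, Complex.cpow_neg, one_div]
    push_cast
    rfl
  set w : ℕ → ℂ := fun n => Pc ((n : ℝ) + x) s - pc ((n : ℝ) + x) s / 2 with hw
  have termw : ∀ n : ℕ, term x n s = pc ((n : ℝ) + x) s + (w n - w (n + 1)) := by
    intro n
    simp only [term, hw]
    push_cast
    ring
  have hpart : ∀ N : ℕ, ∑ n ∈ Finset.range N, term x n s
      = (∑ n ∈ Finset.range N, pc ((n : ℝ) + x) s) + (w 0 - w N) := by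
    intro N
    rw [← Finset.sum_range_sub' w N, ← Finset.sum_add_distrib]
    exact Finset.sum_congr rfl fun n _ => termw n
  have hw0 : Tendsto w atTop (𝓝 0) := by
    have hbase : Tendsto (fun N : ℕ => (N : ℝ) + x) atTop atTop :=
      tendsto_atTop_add_const_right _ x tendsto_natCast_atTop_atTop
    have h1 : Tendsto (fun N : ℕ => Pc ((N : ℝ) + x) s) atTop (𝓝 0) := by
      apply squeeze_zero_norm (a := fun N : ℕ => ((N : ℝ) + x) ^ (1 - s.re) / ‖1 - s‖)
      · intro N
        have hp : (0:ℝ) < (N : ℝ) + x := by positivity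
        rw [Pc, norm_div, norm_cpow_real hp]
        simp [Complex.sub_re]
      · rw [show (0:ℝ) = 0 / ‖1 - s‖ by simp]
        apply Tendsto.div_const
        exact (tendsto_rpow_neg_atTop (y := s.re - 1) (by linarith)).comp hbase |>.congr fun N => by
          rw [Function.comp_apply, show -(s.re - 1) = 1 - s.re by ring]
    have h2 : Tendsto (fun N : ℕ => pc ((N : ℝ) + x) s) atTop (𝓝 0) := by
      apply squeeze_zero_norm (a := fun N : ℕ => ((N : ℝ) + x) ^ (-s.re))
      · intro N
        have hp : (0:ℝ) < (N : ℝ) + x := by positivity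
        rw [pc, norm_cpow_real hp]
        simp
      · exact (tendsto_rpow_neg_atTop (y := s.re) (by linarith)).comp hbase
    simpa using h1.sub (h2.div_const 2)
  have hGsum : Summable (fun n : ℕ => term x n s) := summable_term hx hs1 (by linarith)
  have hts : Tendsto (fun N : ℕ => ∑ n ∈ Finset.range N, term x n s) atTop
      (𝓝 (HurwitzZeta.hurwitzZeta (x : UnitAddCircle) s + (w 0 - 0))) := by
    simp_rw [hpart]
    exact hHf.tendsto_sum_nat.add (tendsto_const_nhds.sub hw0)
  have := tendsto_nhds_unique hGsum.hasSum.tendsto_sum_nat hts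
  rw [G, this]
  have hw0v : w 0 = Pc x s - pc x s / 2 := by simp [hw]
  rw [hw0v]
  ring


lemma tlu {x : ℝ} (hx : 0 < x) (hx1 : x ≤ 1) :
    TendstoLocallyUniformlyOn (fun N s => ∑ n ∈ Finset.range N, term x n s) (G x) atTop U := by
  intro u hu z hz
  obtain ⟨hz1, hz2⟩ := hz
  set r : ℝ := (z.re + 1) / 2 with hr
  have hr0 : 0 < r := by rw [hr]; linarith
  set σ : ℝ := (z.re - 1) / 2 with hσ
  have hσ1 : -1 < σ := by rw [hσ]; linarith
  set R : ℝ := ‖z‖ + r with hR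
  have hzre : z.re ≤ ‖z‖ := Complex.re_le_norm z
  have hσR : σ ≤ R := by
    have : (0:ℝ) ≤ ‖z‖ := norm_nonneg z
    rw [hσ, hR]; nlinarith [Complex.re_le_norm z, abs_le_abs (le_refl z.re)]
  set K : ℝ := max 1 (x ^ (σ - R)) with hK
  have hK1 : (1:ℝ) ≤ K := le_max_left _ _
  set C : ℝ := R * (R + 1) / 2 * K with hC
  set t : Set ℂ := Metric.ball z r ∩ U with ht
  refine ⟨t, Filter.inter_mem (mem_nhdsWithin_of_mem_nhds (Metric.ball_mem_nhds z hr0))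
    self_mem_nhdsWithin, ?_⟩
  have hbound : ∀ (n : ℕ) (s : ℂ), s ∈ t → ‖term x n s‖ ≤ C * ((n : ℝ) + x) ^ (-σ - 2) := by
    intro n s hst
    obtain ⟨hball, hsU⟩ := hst
    have hsball : ‖s - z‖ < r := by
      rw [← dist_eq_norm]; exact Metric.mem_ball.1 hball
    have hsz : ‖s‖ < R := by
      calc ‖s‖ = ‖z + (s - z)‖ := by ring_nf
        _ ≤ ‖z‖ + ‖s - z‖ := norm_add_le _ _
        _ < R := by rw [hR]; linarith
    have hsre : σ < s.re := by
      have h1 : |s.re - z.re| ≤ ‖s - z‖ := by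
        rw [← Complex.sub_re]; exact Complex.abs_re_le_norm _
      have := abs_le.1 h1
      rw [hσ]; rw [hr] at hsball; linarith [this.1]
    have hsreR : s.re ≤ R := le_trans (Complex.re_le_norm s) hsz.le
    have hb : (0:ℝ) < (n:ℝ) + x := by positivity
    have key := term_bound hx hsU.2 (by linarith) n
    have hsplit : ((n:ℝ) + x) ^ (-s.re - 2) = ((n:ℝ) + x) ^ (-σ - 2) * ((n:ℝ) + x) ^ (σ - s.re) := by
      rw [← Real.rpow_add hb]; ring_nf
    have hfac : ((n:ℝ) + x) ^ (σ - s.re) ≤ K := by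
      rcases le_or_gt 1 ((n:ℝ) + x) with hc | hc
      · exact le_trans (Real.rpow_le_one_of_one_le_of_nonpos hc (by linarith)) hK1
      · calc ((n:ℝ) + x) ^ (σ - s.re) ≤ ((n:ℝ) + x) ^ (σ - R) :=
              Real.rpow_le_rpow_of_exponent_ge hb hc.le (by linarith)
          _ ≤ x ^ (σ - R) :=
              Real.rpow_le_rpow_of_nonpos hx (le_add_of_nonneg_left (by positivity)) (by linarith)
          _ ≤ K := le_max_right _ _
    have hnorms : ‖s‖ * ‖s + 1‖ / 2 ≤ R * (R + 1) / 2 := by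
      have h1 : ‖s + 1‖ ≤ ‖s‖ + 1 := by
        calc ‖s + 1‖ ≤ ‖s‖ + ‖(1:ℂ)‖ := norm_add_le _ _
          _ = ‖s‖ + 1 := by norm_num
      have h2 : (0:ℝ) ≤ ‖s‖ := norm_nonneg s
      nlinarith [norm_nonneg (s+1)]
    calc ‖term x n s‖ ≤ ‖s‖ * ‖s + 1‖ / 2 * ((n:ℝ) + x) ^ (-s.re - 2) := key
      _ = ‖s‖ * ‖s + 1‖ / 2 * (((n:ℝ) + x) ^ (-σ - 2) * ((n:ℝ) + x) ^ (σ - s.re)) := by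
          rw [hsplit]
      _ ≤ R * (R + 1) / 2 * (((n:ℝ) + x) ^ (-σ - 2) * K) := by
          have hp1 : (0:ℝ) ≤ ((n:ℝ) + x) ^ (-σ - 2) := Real.rpow_nonneg hb.le _
          have hp2 : (0:ℝ) ≤ ((n:ℝ) + x) ^ (σ - s.re) := Real.rpow_nonneg hb.le _
          have := mul_le_mul hnorms (mul_le_mul_of_nonneg_left hfac hp1)
            (by positivity) (by positivity)
          linarith
      _ = C * ((n:ℝ) + x) ^ (-σ - 2) := by rw [hC]; ring
  have hsummable : Summable (fun n : ℕ => C * ((n : ℝ) + x) ^ (-σ - 2)) := by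
    have := (summable_shift hx (q := σ + 2) (by linarith)).mul_left C
    simpa [show -(σ + 2) = -σ - 2 by ring] using this
  exact tendstoUniformlyOn_tsum_nat hsummable hbound u hu

lemma G_diffOn {x : ℝ} (hx : 0 < x) (hx1 : x ≤ 1) : DifferentiableOn ℂ (G x) U := by
  refine (tlu hx hx1).differentiableOn ?_ isOpen_U
  filter_upwards with N
  intro s hsU
  exact (DifferentiableAt.fun_sum fun n _ => differentiableAt_term hx n hsU.2).differentiableWithinAt


lemma zero_mem_U : (0 : ℂ) ∈ U := by
  constructor
  · norm_num
  · intro h; exact zero_ne_one h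

lemma hurwitzZeta_eqOn {x : ℝ} (hx : 0 < x) (hx1 : x ≤ 1) :
    Set.EqOn (fun s => HurwitzZeta.hurwitzZeta (x : UnitAddCircle) s)
      (fun s => G x s + pc x s / 2 - Pc x s) U := by
  have hf : AnalyticOnNhd ℂ (fun s => HurwitzZeta.hurwitzZeta (x : UnitAddCircle) s) U := by
    refine DifferentiableOn.analyticOnNhd ?_ isOpen_U
    intro s hs
    exact (HurwitzZeta.differentiableAt_hurwitzZeta _ hs.2).differentiableWithinAt
  have hg : AnalyticOnNhd ℂ (fun s => G x s + pc x s / 2 - Pc x s) U := by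
    refine DifferentiableOn.analyticOnNhd ?_ isOpen_U
    intro s hs
    refine DifferentiableWithinAt.sub (DifferentiableWithinAt.add
      ((G_diffOn hx hx1) s hs) ?_) ?_
    · exact ((hasDerivAt_pc hx s).differentiableAt.div_const 2).differentiableWithinAt
    · exact (hasDerivAt_Pc hx hs.2).differentiableAt.differentiableWithinAt
  have h2U : (2 : ℂ) ∈ U := by
    constructor
    · norm_num
    · intro h
      have : (2 : ℂ).re = (1 : ℂ).re := by rw [h]
      norm_num at this
  have hfreq : ∃ᶠ z in 𝓝[≠] (2:ℂ),
      (fun s => HurwitzZeta.hurwitzZeta (x : UnitAddCircle) s) z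
        = (fun s => G x s + pc x s / 2 - Pc x s) z := by
    have hev : ∀ᶠ z in 𝓝 (2:ℂ), z ∈ {s : ℂ | 1 < s.re} := by
      apply IsOpen.eventually_mem
      · exact isOpen_lt continuous_const Complex.continuous_re
      · show (1:ℝ) < (2:ℂ).re
        norm_num
    have hev2 : ∀ᶠ z in 𝓝 (2:ℂ),
        HurwitzZeta.hurwitzZeta (x : UnitAddCircle) z = G x z + pc x z / 2 - Pc x z := by
      filter_upwards [hev] with z hz
      exact hurwitzZeta_eq hx hx1 hz
    exact (hev2.filter_mono nhdsWithin_le_nhds).frequently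
  exact AnalyticOnNhd.eqOn_of_preconnected_of_frequently_eq hf hg isPreconnected_U h2U hfreq

noncomputable def dreal (x : ℝ) (n : ℕ) : ℝ :=
  -(Real.log ((n:ℝ) + x)) / 2 - Real.log ((n:ℝ) + 1 + x) / 2
    + (((n:ℝ) + x) - ((n:ℝ) + x) * Real.log ((n:ℝ) + x))
    - (((n:ℝ) + 1 + x) - ((n:ℝ) + 1 + x) * Real.log ((n:ℝ) + 1 + x))

lemma deriv_G_eq {x : ℝ} (hx : 0 < x) (hx1 : x ≤ 1) :
    Tendsto (fun N : ℕ => ((∑ n ∈ Finset.range N, dreal x n : ℝ) : ℂ)) atTop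
      (𝓝 (deriv (G x) 0)) := by
  have hdiff : ∀ᶠ N : ℕ in atTop,
      DifferentiableOn ℂ (fun s => ∑ n ∈ Finset.range N, term x n s) U := by
    filter_upwards with N
    intro s hsU
    exact (DifferentiableAt.fun_sum fun n _ => differentiableAt_term hx n hsU.2).differentiableWithinAt
  have hder := ((tlu hx hx1).deriv hdiff isOpen_U).tendsto_at zero_mem_U
  have heq : ∀ N : ℕ, (deriv ∘ fun N s => ∑ n ∈ Finset.range N, term x n s) N 0
      = ((∑ n ∈ Finset.range N, dreal x n : ℝ) : ℂ) := by
    intro N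
    have hd : HasDerivAt (fun s => ∑ n ∈ Finset.range N, term x n s)
        (∑ n ∈ Finset.range N, ((dreal x n : ℝ) : ℂ)) 0 :=
      HasDerivAt.fun_sum fun n _ => hasDerivAt_term_zero hx n
    simp only [Function.comp_apply]
    rw [hd.deriv]
    push_cast
    rfl
  exact Filter.Tendsto.congr heq hder


lemma sum_dreal {x : ℝ} (hx : 0 < x) (N : ℕ) :
    ∑ n ∈ Finset.range N, dreal x n
      = -(∑ n ∈ Finset.range N, Real.log ((n:ℝ) + x))
        - (Real.log ((N:ℝ) + x) / 2 + ((N:ℝ) + x) - ((N:ℝ) + x) * Real.log ((N:ℝ) + x))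
        + (Real.log x / 2 + x - x * Real.log x) := by
  set e : ℕ → ℝ := fun n =>
    Real.log ((n:ℝ) + x) / 2 + ((n:ℝ) + x) - ((n:ℝ) + x) * Real.log ((n:ℝ) + x) with he
  have h1 : ∀ n : ℕ, dreal x n = -Real.log ((n:ℝ) + x) + (e n - e (n + 1)) := by
    intro n
    simp only [dreal, he]
    push_cast
    ring
  rw [Finset.sum_congr rfl (fun n _ => h1 n), Finset.sum_add_distrib,
    Finset.sum_range_sub' e N]
  have he0 : e 0 = Real.log x / 2 + x - x * Real.log x := by simp [he]
  rw [he0]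
  rw [Finset.sum_neg_distrib]
  ring

lemma tendsto_B {x : ℝ} (hx : 0 < x) :
    Tendsto (fun N : ℕ => -(∑ n ∈ Finset.range N, Real.log ((n:ℝ) + x))
        - (Real.log ((N:ℝ) + x) / 2 + ((N:ℝ) + x) - ((N:ℝ) + x) * Real.log ((N:ℝ) + x)))
      atTop (𝓝 (Real.log (Real.Gamma x) - Real.log (2 * Real.pi) / 2)) := by
  have hΓ : Tendsto (fun N : ℕ => Real.log (Real.GammaSeq x N)) atTop
      (𝓝 (Real.log (Real.Gamma x))) :=
    (Real.GammaSeq_tendsto_Gamma x).log (Real.Gamma_pos_of_pos hx).ne'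
  have hSt : Tendsto (fun N : ℕ => Real.log (Stirling.stirlingSeq N)) atTop
      (𝓝 (Real.log Real.pi / 2)) := by
    have h := Stirling.tendsto_stirlingSeq_sqrt_pi.log (Real.sqrt_pos.2 Real.pi_pos).ne'
    rwa [Real.log_sqrt Real.pi_pos.le] at h
  have hr1 : Tendsto (fun N : ℕ => (N:ℝ) * Real.log (1 + x / (N:ℝ))) atTop (𝓝 x) :=
    (Real.tendsto_mul_log_one_add_div_atTop x).comp tendsto_natCast_atTop_atTop
  have hq : Tendsto (fun N : ℕ => 1 + x / (N:ℝ)) atTop (𝓝 1) := by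
    have := tendsto_const_div_atTop_nhds_zero_nat x
    simpa using tendsto_const_nhds.add this
  have hr2 : Tendsto (fun N : ℕ => (x + 1/2) * Real.log (1 + x / (N:ℝ))) atTop (𝓝 0) := by
    have hl : Tendsto (fun N : ℕ => Real.log (1 + x / (N:ℝ))) atTop (𝓝 0) := by
      have := hq.log one_ne_zero
      simpa using this
    simpa using hl.const_mul (x + 1/2)
  have hcomb : Tendsto (fun N : ℕ =>
      Real.log (Real.GammaSeq x N) - Real.log (Stirling.stirlingSeq N) - Real.log 2 / 2
        + ((N:ℝ) * Real.log (1 + x / (N:ℝ)) + (x + 1/2) * Real.log (1 + x / (N:ℝ))) - x)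
      atTop (𝓝 (Real.log (Real.Gamma x) - Real.log (2 * Real.pi) / 2)) := by
    have h := (((hΓ.sub hSt).sub_const (Real.log 2 / 2)).add (hr1.add hr2)).sub_const x
    have : Real.log (Real.Gamma x) - Real.log Real.pi / 2 - Real.log 2 / 2 + (x + 0) - x
        = Real.log (Real.Gamma x) - Real.log (2 * Real.pi) / 2 := by
      rw [Real.log_mul two_ne_zero Real.pi_pos.ne']
      ring
    rwa [this] at h
  refine Tendsto.congr' ?_ hcomb
  filter_upwards [eventually_ge_atTop 1] with N hN
  have hN0 : (0:ℝ) < (N:ℝ) := by exact_mod_cast hN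
  have hNx : (0:ℝ) < (N:ℝ) + x := by linarith
  -- log of GammaSeq
  have hGS : Real.log (Real.GammaSeq x N)
      = x * Real.log N + Real.log (N.factorial : ℝ)
        - ∑ j ∈ Finset.range (N+1), Real.log (x + (j:ℝ)) := by
    rw [Real.GammaSeq]
    rw [Real.log_div (by positivity) (by positivity)]
    rw [Real.log_mul (by positivity) (by positivity)]
    rw [Real.log_rpow hN0]
    rw [Real.log_prod (fun j _ => by positivity)]
  have hLF : Real.log (N.factorial : ℝ)
      = Real.log (Stirling.stirlingSeq N) + (Real.log 2 + Real.log N) / 2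
        + (N:ℝ) * (Real.log N - 1) := by
    have h := Stirling.log_stirlingSeq_formula N
    rw [Real.log_mul two_ne_zero hN0.ne', Real.log_div hN0.ne' (Real.exp_ne_zero 1),
      Real.log_exp] at h
    linarith
  have hlog1p : Real.log (1 + x / (N:ℝ)) = Real.log ((N:ℝ) + x) - Real.log N := by
    rw [show 1 + x / (N:ℝ) = ((N:ℝ) + x) / N by field_simp,
      Real.log_div hNx.ne' hN0.ne']
  have hsplit : ∑ j ∈ Finset.range (N+1), Real.log (x + (j:ℝ))
      = (∑ j ∈ Finset.range N, Real.log (x + (j:ℝ))) + Real.log (x + (N:ℝ)) :=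
    Finset.sum_range_succ _ N
  have hcomm : ∑ n ∈ Finset.range N, Real.log ((n:ℝ) + x)
      = ∑ n ∈ Finset.range N, Real.log (x + (n:ℝ)) :=
    Finset.sum_congr rfl fun n _ => by rw [add_comm]
  have hcommN : Real.log (x + (N:ℝ)) = Real.log ((N:ℝ) + x) := by rw [add_comm]
  have hS1 : ∑ n ∈ Finset.range N, Real.log (x + (n:ℝ))
      = x * Real.log N + Real.log (N.factorial : ℝ) - Real.log (Real.GammaSeq x N)
        - Real.log ((N:ℝ) + x) := by
    rw [hsplit, hcommN] at hGS
    linarith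
  rw [hcomm, hS1, hLF, hlog1p]
  ring

/-- The limit of the partial sums of `dreal`. -/
lemma tendsto_sum_dreal {x : ℝ} (hx : 0 < x) :
    Tendsto (fun N : ℕ => ∑ n ∈ Finset.range N, dreal x n) atTop
      (𝓝 (Real.log (Real.Gamma x) - Real.log (2 * Real.pi) / 2
        + (Real.log x / 2 + x - x * Real.log x))) := by
  have h := (tendsto_B hx).add_const (Real.log x / 2 + x - x * Real.log x)
  refine Tendsto.congr (fun N => ?_) h
  rw [sum_dreal hx N]


lemma deriv_G_value {x : ℝ} (hx : 0 < x) (hx1 : x ≤ 1) :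
    deriv (G x) 0 = ((Real.log (Real.Gamma x) - Real.log (2 * Real.pi) / 2
        + (Real.log x / 2 + x - x * Real.log x) : ℝ) : ℂ) :=
  tendsto_nhds_unique (deriv_G_eq hx hx1)
    ((Complex.continuous_ofReal.tendsto _).comp (tendsto_sum_dreal hx))

lemma key_formula {x : ℝ} (hx : 0 < x) (hx1 : x ≤ 1) :
    deriv (fun s : ℂ => HurwitzZeta.hurwitzZeta (x : UnitAddCircle) s) 0
      = ((Real.log (Real.Gamma x) - Real.log (2 * Real.pi) / 2 : ℝ) : ℂ) := by
  have hEv : (fun s : ℂ => HurwitzZeta.hurwitzZeta (x : UnitAddCircle) s)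
      =ᶠ[𝓝 (0 : ℂ)] (fun s => G x s + pc x s / 2 - Pc x s) :=
    Filter.eventuallyEq_of_mem (isOpen_U.mem_nhds zero_mem_U) (hurwitzZeta_eqOn hx hx1)
  rw [hEv.deriv_eq]
  have hG0 : HasDerivAt (G x) (deriv (G x) 0) 0 :=
    ((G_diffOn hx hx1).differentiableAt (isOpen_U.mem_nhds zero_mem_U)).hasDerivAt
  have hpc2 := (hasDerivAt_pc hx 0).div_const 2
  have hPc0 := hasDerivAt_Pc hx (s := 0) (by exact zero_ne_one)
  have total := (hG0.add hpc2).sub hPc0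
  rw [show (fun s => G x s + pc x s / 2 - Pc x s) = ((G x + fun s => pc x s / 2) - Pc x) from rfl,
    total.deriv, deriv_G_value hx hx1]
  have e1 : pc x 0 = 1 := by simp [pc]
  have e3 : (Complex.ofReal x) ^ ((1:ℂ) - 0) = Complex.ofReal x := by
    rw [sub_zero, Complex.cpow_one]
  rw [e1, e3]
  push_cast
  ring

end LerchAux


/-- Lerch's formula: for `0 < x ≤ 1`, the derivative in `s` of the Hurwitz zeta function
`H(x, s)` at `s = 0` equals `log (Γ(x) / √(2π)) = log Γ(x) - (1/2) log (2π)`. -/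
theorem lerch_formula (x : ℝ) (hx0 : 0 < x) (hx1 : x ≤ 1) :
    deriv (fun s : ℂ => hurwitzZeta (x : UnitAddCircle) s) 0
        = (Real.log (Real.Gamma x / Real.sqrt (2 * Real.pi)) : ℂ) ∧
      deriv (fun s : ℂ => hurwitzZeta (x : UnitAddCircle) s) 0
        = (Real.log (Real.Gamma x) - (1 / 2) * Real.log (2 * Real.pi) : ℝ) := by
  have key := LerchAux.key_formula hx0 hx1
  have h2π : (0:ℝ) < 2 * Real.pi := by positivity
  constructor
  · rw [key]
    congr 1
    rw [Real.log_div (Real.Gamma_pos_of_pos hx0).ne' (Real.sqrt_ne_zero'.2 h2π),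
      Real.log_sqrt h2π.le]
  · rw [key]
    congr 1
    ring
end

section
/- The derivative of the Riemann zeta function at s = 0 equals -(1/2)·log(2π); equivalently, since ζ(0) = -1/2, the logarithmic derivative ζ'(0)/ζ(0) equals log(2π). -/
open Filter Topology Complex Set

local notation "γ" => Real.eulerMascheroniConstant

noncomputable def Ezeta : ℂ → ℂ := Function.update (fun s => s * riemannZeta (1 - s)) 0 (-1)

lemma Ezeta_zero : Ezeta 0 = -1 := Function.update_self _ _ _

lemma Ezeta_of_ne {s : ℂ} (hs : s ≠ 0) : Ezeta s = s * riemannZeta (1 - s) :=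
  Function.update_of_ne hs _ _

lemma hasDerivAt_Ezeta : HasDerivAt Ezeta (γ : ℂ) 0 := by
  rw [hasDerivAt_iff_tendsto_slope]
  have h1 : Tendsto (fun s : ℂ => 1 - s) (𝓝[≠] 0) (𝓝[≠] 1) := by
    apply tendsto_nhdsWithin_of_tendsto_nhds_of_eventually_within
    · have h : Tendsto (fun s : ℂ => 1 - s) (𝓝 0) (𝓝 1) := by
        have hc : Continuous fun s : ℂ => 1 - s := by continuity
        simpa using hc.tendsto 0
      exact h.mono_left nhdsWithin_le_nhds
    · filter_upwards [self_mem_nhdsWithin] with s hs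
      simp only [Set.mem_compl_iff, Set.mem_singleton_iff] at hs ⊢
      intro h
      exact hs (by linear_combination -h)
  have h2 := tendsto_riemannZeta_sub_one_div.comp h1
  apply h2.congr'
  filter_upwards [self_mem_nhdsWithin] with s hs
  simp only [Set.mem_compl_iff, Set.mem_singleton_iff] at hs
  rw [Function.comp_apply, slope_def_field, Ezeta_of_ne hs, Ezeta_zero, sub_zero,
    show (1 : ℂ) - s - 1 = -s by ring]
  field_simp

noncomputable def Ssin : ℂ → ℂ := dslope Complex.sin 0

lemma Ssin_zero : Ssin 0 = 1 := by
  rw [Ssin, dslope_same, (Complex.hasDerivAt_sin 0).deriv, Complex.cos_zero]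

lemma Ssin_of_ne {z : ℂ} (hz : z ≠ 0) : Ssin z = Complex.sin z / z := by
  rw [Ssin, dslope_of_ne _ hz, slope_def_field, Complex.sin_zero, sub_zero, sub_zero]

lemma differentiableAt_Ssin : DifferentiableAt ℂ Ssin 0 := by
  have hS : AnalyticAt ℂ Complex.sin 0 :=
    Complex.differentiable_sin.differentiableOn.analyticAt univ_mem
  obtain ⟨p, hp⟩ := hS
  exact hp.has_fpower_series_dslope_fslope.analyticAt.differentiableAt

lemma hasDerivAt_Ssin : HasDerivAt Ssin 0 0 := by
  have hd := differentiableAt_Ssin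
  have heven : (fun z => Ssin (-z)) = Ssin := by
    funext z
    rcases eq_or_ne z 0 with rfl | hz
    · simp
    · rw [Ssin_of_ne (neg_ne_zero.mpr hz), Ssin_of_ne hz, Complex.sin_neg, neg_div_neg_eq]
  have houter : HasDerivAt Ssin (deriv Ssin 0) ((fun z : ℂ => -z) 0) := by
    simpa using hd.hasDerivAt
  have hinner : HasDerivAt (fun z : ℂ => -z) (-1 : ℂ) 0 := by
    exact (hasDerivAt_id' (0 : ℂ)).neg
  have hneg : HasDerivAt (fun z => Ssin (-z)) (deriv Ssin 0 * -1) 0 := houter.comp 0 hinner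
  rw [heven] at hneg
  have h0 : deriv Ssin 0 = deriv Ssin 0 * -1 := hneg.deriv
  have hz : deriv Ssin 0 = 0 := by
    have h2 : 2 * deriv Ssin 0 = 0 := by linear_combination h0
    simpa using h2
  simpa [hz] using hd.hasDerivAt

noncomputable def Azeta : ℂ → ℂ :=
  fun s => (Real.pi : ℂ) * (2 * (Real.pi : ℂ)) ^ (s - 1) * Complex.Gamma (1 - s)

lemma two_pi_ne : (2 * (Real.pi : ℂ)) ≠ 0 := by
  simp [Real.pi_ne_zero, Complex.ofReal_ne_zero]

lemma log_two_pi : Complex.log (2 * (Real.pi : ℂ)) = (Real.log (2 * Real.pi) : ℂ) := by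
  rw [show (2 * (Real.pi : ℂ)) = ((2 * Real.pi : ℝ) : ℂ) by push_cast; ring,
    Complex.ofReal_log (by positivity)]

lemma hasDerivAt_Gamma_one_sub : HasDerivAt (fun s : ℂ => Complex.Gamma (1 - s)) (γ : ℂ) 0 := by
  have hG1 : HasDerivAt Complex.Gamma (-γ : ℂ) ((fun s : ℂ => 1 - s) 0) := by
    have h := Complex.hasDerivAt_Gamma_nat 0
    norm_num at h
    convert h using 1
    norm_num
  have hin : HasDerivAt (fun s : ℂ => 1 - s) (-1 : ℂ) 0 := by
    simpa using (hasDerivAt_id (0 : ℂ)).const_sub (1 : ℂ)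
  have h := hG1.comp 0 hin
  exact h.congr_deriv (by ring)

lemma hasDerivAt_Azeta :
    HasDerivAt Azeta (((Real.log (2 * Real.pi) : ℂ) + (γ : ℂ)) / 2) 0 := by
  have hpow : HasDerivAt (fun s : ℂ => (2 * (Real.pi : ℂ)) ^ (s - 1))
      ((2 * (Real.pi : ℂ)) ^ ((0 : ℂ) - 1) * Complex.log (2 * (Real.pi : ℂ)) * 1) 0 :=
    ((hasDerivAt_id (0 : ℂ)).sub_const 1).const_cpow (Or.inl two_pi_ne)
  have hmul := (hpow.const_mul (Real.pi : ℂ)).mul hasDerivAt_Gamma_one_sub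
  have h0 : ((2 * (Real.pi : ℂ)) ^ ((0 : ℂ) - 1)) = (2 * (Real.pi : ℂ))⁻¹ := by
    norm_num [Complex.cpow_neg_one]
  rw [show (1 : ℂ) - 0 = 1 by ring, Complex.Gamma_one, h0, log_two_pi] at hmul
  have hπ : (Real.pi : ℂ) ≠ 0 := Complex.ofReal_ne_zero.mpr Real.pi_ne_zero
  exact hmul.congr_deriv (by field_simp)

noncomputable def Phi : ℂ → ℂ :=
  fun s => Azeta s * Ssin ((Real.pi : ℂ) * s / 2) * Ezeta s

lemma Azeta_zero : Azeta 0 = 1 / 2 := by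
  rw [Azeta, show (0 : ℂ) - 1 = -1 by ring, Complex.cpow_neg_one,
    show (1 : ℂ) - 0 = 1 by ring, Complex.Gamma_one]
  have hπ : (Real.pi : ℂ) ≠ 0 := Complex.ofReal_ne_zero.mpr Real.pi_ne_zero
  field_simp

lemma hasDerivAt_Phi :
    HasDerivAt Phi (-(1 / 2 : ℂ) * (Real.log (2 * Real.pi) : ℂ)) 0 := by
  have hSo : HasDerivAt Ssin 0 ((fun s : ℂ => (Real.pi : ℂ) * s / 2) 0) := by
    simpa using hasDerivAt_Ssin
  have hin : HasDerivAt (fun s : ℂ => (Real.pi : ℂ) * s / 2) ((Real.pi : ℂ) / 2) 0 := by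
    simpa using ((hasDerivAt_id (0 : ℂ)).const_mul (Real.pi : ℂ)).div_const 2
  have hSc : HasDerivAt (fun s : ℂ => Ssin ((Real.pi : ℂ) * s / 2)) (0 * ((Real.pi : ℂ) / 2)) 0 :=
    hSo.comp 0 hin
  have h := (hasDerivAt_Azeta.mul hSc).mul hasDerivAt_Ezeta
  rw [Pi.mul_apply, show ((Real.pi : ℂ) * 0 / 2) = 0 by ring, Ssin_zero, Ezeta_zero, Azeta_zero] at h
  exact h.congr_deriv (by ring)

lemma Phi_eq : riemannZeta =ᶠ[𝓝 0] Phi := by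
  filter_upwards [Metric.ball_mem_nhds (0 : ℂ) one_pos] with s hs
  rcases eq_or_ne s 0 with rfl | hs0
  · rw [riemannZeta_zero, Phi, show ((Real.pi : ℂ) * 0 / 2) = 0 by ring,
      Ssin_zero, Ezeta_zero, Azeta_zero]
    ring
  · have hnorm : ‖s‖ < 1 := by simpa using hs
    have h1 : ∀ n : ℕ, (1 - s) ≠ -(n : ℂ) := by
      intro n h
      have hs1 : s = 1 + n := by linear_combination -h
      rw [hs1, show ((1 : ℂ) + n) = (((1 + n : ℝ)) : ℂ) by push_cast; ring] at hnorm
      rw [Complex.norm_real, Real.norm_eq_abs, _root_.abs_of_nonneg (by positivity)] at hnorm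
      have hn : (0 : ℝ) ≤ n := n.cast_nonneg
      linarith
    have h2 : (1 - s) ≠ 1 := fun h => hs0 (by linear_combination -h)
    have hfe := riemannZeta_one_sub h1 h2
    rw [show (1 : ℂ) - (1 - s) = s by ring] at hfe
    rw [hfe, Phi, Ezeta_of_ne hs0]
    have hπ : (Real.pi : ℂ) ≠ 0 := Complex.ofReal_ne_zero.mpr Real.pi_ne_zero
    have hargne : ((Real.pi : ℂ) * s / 2) ≠ 0 := by
      simp [hπ, hs0]
    rw [Ssin_of_ne hargne, Azeta,
      show ((Real.pi : ℂ) * (1 - s) / 2) = (Real.pi : ℂ) / 2 - (Real.pi : ℂ) * s / 2 by ring,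
      Complex.cos_pi_div_two_sub, show -(1 - s) = s - 1 by ring]
    field_simp

namespace ZetaPaper

/-- The derivative of the Riemann zeta function at `s = 0` equals `-(1/2)·log (2π)`;
equivalently (since `ζ(0) = -1/2`), the logarithmic derivative `ζ'(0)/ζ(0)` equals `log (2π)`. -/
theorem deriv_riemannZeta_zero :
    deriv riemannZeta 0 = -(1 / 2 : ℂ) * (Real.log (2 * Real.pi) : ℂ) ∧
      deriv riemannZeta 0 / riemannZeta 0 = (Real.log (2 * Real.pi) : ℂ) := by
  have hζ : HasDerivAt riemannZeta (-(1 / 2 : ℂ) * (Real.log (2 * Real.pi) : ℂ)) 0 :=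
    hasDerivAt_Phi.congr_of_eventuallyEq Phi_eq
  refine ⟨hζ.deriv, ?_⟩
  rw [hζ.deriv, riemannZeta_zero]
  rw [div_eq_iff (by norm_num : (-1 / 2 : ℂ) ≠ 0)]
  ring
end ZetaPaper
end

section
/- Let p be a prime and let r, s, t be integers with 0 < r, s, t < p and r + s + t = p. For every integer a not divisible by p, the sum ⟨ar/p⟩ + ⟨as/p⟩ + ⟨at/p⟩ equals either 1 or 2; moreover, this sum equals 1 for a if and only if it equals 2 for p - a. In particular, the set Φ = {a ∈ (ℤ/pℤ)^*: ⟨ar/p⟩ + ⟨as/p⟩ + ⟨at/p⟩ = 1} has exactly (p-1)/2 elements. -/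
private lemma frac_emod (p : ℕ) (hp : 0 < p) (m : ℤ) :
    Int.fract ((m : ℚ) / p) = ((m % p : ℤ) : ℚ) / p := by
  have hp' : (0:ℚ) < p := by exact_mod_cast hp
  have hpZ : (0:ℤ) < p := by exact_mod_cast hp
  have h := Int.mul_ediv_add_emod m p
  have hrw : (m : ℚ) / p = ((m / (p:ℤ) : ℤ) : ℚ) + ((m % p : ℤ) : ℚ) / p := by
    have h2 : m = m / (p:ℤ) * p + m % p := by rw [mul_comm]; exact h.symm
    field_simp
    exact_mod_cast h.symm
  rw [hrw, Int.fract_intCast_add, Int.fract_eq_self.mpr]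
  constructor
  · have : (0:ℤ) ≤ m % p := Int.emod_nonneg m hpZ.ne'
    positivity
  · rw [div_lt_one hp']
    exact_mod_cast Int.emod_lt_of_pos m hpZ

/-- Let `p` be prime and `r, s, t` integers with `0 < r, s, t < p` and `r + s + t = p`. For any
integer `a` not divisible by `p`, the sum `⟨ar/p⟩ + ⟨as/p⟩ + ⟨at/p⟩` of fractional parts equals
either `1` or `2`; this sum equals `1` for `a` iff it equals `2` for `p - a`; and the set
`Φ = {a ∈ (ℤ/pℤ)^* : ⟨ar/p⟩ + ⟨as/p⟩ + ⟨at/p⟩ = 1}` has exactly `(p-1)/2` elements. -/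
theorem fract_sum_one_or_two (p : ℕ) (hp : p.Prime) (r s t : ℤ)
    (hr0 : 0 < r) (hrp : r < p) (hs0 : 0 < s) (hsp : s < p) (ht0 : 0 < t) (htp : t < p)
    (hsum : r + s + t = p) :
    (∀ a : ℤ, ¬ (p : ℤ) ∣ a →
      Int.fract ((a * r : ℚ) / p) + Int.fract ((a * s : ℚ) / p) + Int.fract ((a * t : ℚ) / p) = 1
        ∨ Int.fract ((a * r : ℚ) / p) + Int.fract ((a * s : ℚ) / p)
            + Int.fract ((a * t : ℚ) / p) = 2) ∧
    (∀ a : ℤ, ¬ (p : ℤ) ∣ a →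
      (Int.fract ((a * r : ℚ) / p) + Int.fract ((a * s : ℚ) / p)
          + Int.fract ((a * t : ℚ) / p) = 1 ↔
        Int.fract (((p - a) * r : ℚ) / p) + Int.fract (((p - a) * s : ℚ) / p)
          + Int.fract (((p - a) * t : ℚ) / p) = 2)) ∧
    ((Finset.Icc 1 (p - 1)).filter (fun a : ℕ =>
        Int.fract ((a * r : ℚ) / p) + Int.fract ((a * s : ℚ) / p)
          + Int.fract ((a * t : ℚ) / p) = 1)).card = (p - 1) / 2 := by
  have hp0 : 0 < p := hp.pos
  have hpZ : (0:ℤ) < p := by exact_mod_cast hp0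
  have hpQ : (0:ℚ) < p := by exact_mod_cast hp0
  have hpP : Prime (p:ℤ) := by rw [Int.prime_iff_natAbs_prime]; simpa using hp
  -- divisibility of products
  have hnd : ∀ u : ℤ, 0 < u → u < p → ∀ a : ℤ, ¬ (p:ℤ) ∣ a → ¬ (p:ℤ) ∣ (a * u) := by
    intro u hu0 hup a ha hd
    rcases hpP.dvd_mul.mp hd with h | h
    · exact ha h
    · have := Int.le_of_dvd hu0 h
      omega
  have hmodpos : ∀ m : ℤ, ¬ (p:ℤ) ∣ m → 0 < m % p := by
    intro m hm
    have h1 : (0:ℤ) ≤ m % p := Int.emod_nonneg m hpZ.ne'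
    have h2 : m % p ≠ 0 := fun h => hm (Int.dvd_of_emod_eq_zero h)
    omega
  -- rewrite each fract term
  have hterm : ∀ u : ℤ, ∀ a : ℤ,
      Int.fract ((a * u : ℚ) / p) = ((a * u % p : ℤ) : ℚ) / p := by
    intro u a
    have e : ((a:ℚ) * u) = ((a * u : ℤ) : ℚ) := by push_cast; ring
    rw [e, frac_emod p hp0]
  -- the key value lemma
  have hval : ∀ a : ℤ, ¬ (p : ℤ) ∣ a →
      Int.fract ((a * r : ℚ) / p) + Int.fract ((a * s : ℚ) / p)
        + Int.fract ((a * t : ℚ) / p) = 1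
      ∨ Int.fract ((a * r : ℚ) / p) + Int.fract ((a * s : ℚ) / p)
        + Int.fract ((a * t : ℚ) / p) = 2 := by
    intro a ha
    have hNd : (p:ℤ) ∣ (a * r % p + a * s % p + a * t % p) := by
      refine ⟨a - (a*r/p + a*s/p + a*t/p), ?_⟩
      have h1 := Int.mul_ediv_add_emod (a*r) p
      have h2 := Int.mul_ediv_add_emod (a*s) p
      have h3 := Int.mul_ediv_add_emod (a*t) p
      have h4 : a*r + a*s + a*t = a * p := by rw [← hsum]; ring
      linear_combination h1 + h2 + h3 + h4
    obtain ⟨k, hk⟩ := hNd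
    have hb1 : 0 < a * r % p := hmodpos _ (hnd r hr0 hrp a ha)
    have hb2 : 0 < a * s % p := hmodpos _ (hnd s hs0 hsp a ha)
    have hb3 : 0 < a * t % p := hmodpos _ (hnd t ht0 htp a ha)
    have hc1 : a * r % p < p := Int.emod_lt_of_pos _ hpZ
    have hc2 : a * s % p < p := Int.emod_lt_of_pos _ hpZ
    have hc3 : a * t % p < p := Int.emod_lt_of_pos _ hpZ
    have hk0 : 0 < k := by nlinarith
    have hk3 : k < 3 := by nlinarith
    have hS : Int.fract ((a * r : ℚ) / p) + Int.fract ((a * s : ℚ) / p)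
        + Int.fract ((a * t : ℚ) / p) = (k : ℚ) := by
      rw [hterm r a, hterm s a, hterm t a]
      rw [← add_div, ← add_div]
      rw [show ((a*r % p : ℤ):ℚ) + (a*s % p : ℤ) + (a*t % p : ℤ)
            = ((a * r % p + a * s % p + a * t % p : ℤ) : ℚ) by push_cast; ring, hk]
      push_cast
      field_simp
    interval_cases k
    · exact Or.inl (by rw [hS]; norm_num)
    · exact Or.inr (by rw [hS]; norm_num)
  -- fract positivity
  have hfr : ∀ u : ℤ, 0 < u → u < p → ∀ a : ℤ, ¬ (p:ℤ) ∣ a →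
      0 < Int.fract ((a * u : ℚ) / p) := by
    intro u hu0 hup a ha
    rw [hterm u a]
    have := hmodpos _ (hnd u hu0 hup a ha)
    have : (0:ℚ) < ((a * u % p : ℤ) : ℚ) := by exact_mod_cast this
    positivity
  -- reflection lemma
  have hneg : ∀ u : ℤ, 0 < u → u < p → ∀ a : ℤ, ¬ (p:ℤ) ∣ a →
      Int.fract ((((p:ℚ) - a) * u) / p) = 1 - Int.fract ((a * u : ℚ) / p) := by
    intro u hu0 hup a ha
    have h1 : (((p:ℚ) - a) * u) / p = ((u:ℤ):ℚ) + (-(((a:ℚ) * u) / p)) := by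
      field_simp
      ring
    rw [h1, Int.fract_intCast_add, Int.fract_neg (hfr u hu0 hup a ha).ne']
  have hsum3 : ∀ a : ℤ, ¬ (p:ℤ) ∣ a →
      Int.fract ((a * r : ℚ) / p) + Int.fract ((a * s : ℚ) / p)
        + Int.fract ((a * t : ℚ) / p)
      + (Int.fract ((((p:ℚ) - a) * r) / p) + Int.fract ((((p:ℚ) - a) * s) / p)
        + Int.fract ((((p:ℚ) - a) * t) / p)) = 3 := by
    intro a ha
    rw [hneg r hr0 hrp a ha, hneg s hs0 hsp a ha, hneg t ht0 htp a ha]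
    ring
  have hndp : ∀ a : ℤ, ¬ (p:ℤ) ∣ a → ¬ (p:ℤ) ∣ ((p:ℤ) - a) := by
    intro a ha h
    exact ha (by simpa using dvd_sub (dvd_refl (p:ℤ)) h)
  refine ⟨hval, ?_, ?_⟩
  · intro a ha
    have h3 := hsum3 a ha
    have hv2 := hval ((p:ℤ) - a) (hndp a ha)
    have hcast : (((p:ℤ) - a : ℤ) : ℚ) = (p:ℚ) - a := by push_cast; ring
    rw [hcast] at hv2
    constructor
    · intro h1
      rcases hv2 with h | h
      · linarith
      · exact h
    · intro h2
      rcases hval a ha with h | h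
      · exact h
      · linarith
  · -- cardinality
    have hp3 : 3 ≤ p := by omega
    have hmem : ∀ a : ℕ, a ∈ Finset.Icc 1 (p-1) → ¬ (p:ℤ) ∣ (a:ℤ) := by
      intro a haI hd
      simp only [Finset.mem_Icc] at haI
      have h1 : (0:ℤ) < (a:ℤ) := by exact_mod_cast Nat.lt_of_lt_of_le Nat.zero_lt_one haI.1
      have h2 := Int.le_of_dvd h1 hd
      have : (a:ℤ) < p := by exact_mod_cast Nat.lt_of_le_of_lt haI.2 (by omega)
      omega
    have hvalN : ∀ a : ℕ, a ∈ Finset.Icc 1 (p-1) →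
        (Int.fract ((a * r : ℚ) / p) + Int.fract ((a * s : ℚ) / p)
          + Int.fract ((a * t : ℚ) / p) = 1
        ∨ Int.fract ((a * r : ℚ) / p) + Int.fract ((a * s : ℚ) / p)
          + Int.fract ((a * t : ℚ) / p) = 2) := by
      intro a haI
      have := hval (a:ℤ) (hmem a haI)
      push_cast at this
      exact this
    have hPQ : ∀ a : ℕ, a ∈ Finset.Icc 1 (p-1) →
        ((Int.fract ((a * r : ℚ) / p) + Int.fract ((a * s : ℚ) / p)
            + Int.fract ((a * t : ℚ) / p) = 1 →
          Int.fract (((p - a : ℕ) * r : ℚ) / p) + Int.fract (((p - a : ℕ) * s : ℚ) / p)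
            + Int.fract (((p - a : ℕ) * t : ℚ) / p) = 2) ∧
        (Int.fract ((a * r : ℚ) / p) + Int.fract ((a * s : ℚ) / p)
            + Int.fract ((a * t : ℚ) / p) = 2 →
          Int.fract (((p - a : ℕ) * r : ℚ) / p) + Int.fract (((p - a : ℕ) * s : ℚ) / p)
            + Int.fract (((p - a : ℕ) * t : ℚ) / p) = 1)) := by
      intro a haI
      have hap : a ≤ p := by
        have := Finset.mem_Icc.mp haI
        omega
      have h3 := hsum3 (a:ℤ) (hmem a haI)
      push_cast at h3
      have hc : (((p - a : ℕ)) : ℚ) = (p:ℚ) - a := by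
        push_cast [Nat.cast_sub hap]
        ring
      rw [hc]
      constructor
      · intro hPa
        linarith
      · intro hQa
        linarith
    have hmemIcc : ∀ a : ℕ, a ∈ Finset.Icc 1 (p-1) → p - a ∈ Finset.Icc 1 (p-1) := by
      intro a haI
      simp only [Finset.mem_Icc] at haI ⊢
      omega
    have hcardeq : ((Finset.Icc 1 (p-1)).filter (fun a : ℕ =>
          Int.fract ((a * r : ℚ) / p) + Int.fract ((a * s : ℚ) / p)
            + Int.fract ((a * t : ℚ) / p) = 1)).card
        = ((Finset.Icc 1 (p-1)).filter (fun a : ℕ =>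
          Int.fract ((a * r : ℚ) / p) + Int.fract ((a * s : ℚ) / p)
            + Int.fract ((a * t : ℚ) / p) = 2)).card := by
      apply Finset.card_bij' (fun a _ => p - a) (fun a _ => p - a)
      · intro a ha
        simp only [Finset.mem_filter] at ha ⊢
        exact ⟨hmemIcc a ha.1, (hPQ a ha.1).1 ha.2⟩
      · intro a ha
        simp only [Finset.mem_filter] at ha ⊢
        exact ⟨hmemIcc a ha.1, (hPQ a ha.1).2 ha.2⟩
      · intro a ha
        simp only [Finset.mem_filter, Finset.mem_Icc] at ha
        omega
      · intro a ha
        simp only [Finset.mem_filter, Finset.mem_Icc] at ha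
        omega
    have hdisj : Disjoint ((Finset.Icc 1 (p-1)).filter (fun a : ℕ =>
          Int.fract ((a * r : ℚ) / p) + Int.fract ((a * s : ℚ) / p)
            + Int.fract ((a * t : ℚ) / p) = 1))
        ((Finset.Icc 1 (p-1)).filter (fun a : ℕ =>
          Int.fract ((a * r : ℚ) / p) + Int.fract ((a * s : ℚ) / p)
            + Int.fract ((a * t : ℚ) / p) = 2)) := by
      rw [Finset.disjoint_left]
      intro a ha hb
      simp only [Finset.mem_filter] at ha hb
      have h1 := ha.2
      rw [hb.2] at h1
      norm_num at h1
    have hunion : ((Finset.Icc 1 (p-1)).filter (fun a : ℕ =>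
          Int.fract ((a * r : ℚ) / p) + Int.fract ((a * s : ℚ) / p)
            + Int.fract ((a * t : ℚ) / p) = 1))
        ∪ ((Finset.Icc 1 (p-1)).filter (fun a : ℕ =>
          Int.fract ((a * r : ℚ) / p) + Int.fract ((a * s : ℚ) / p)
            + Int.fract ((a * t : ℚ) / p) = 2))
        = Finset.Icc 1 (p-1) := by
      ext a
      simp only [Finset.mem_union, Finset.mem_filter]
      constructor
      · rintro (h | h) <;> exact h.1
      · intro h
        rcases hvalN a h with h' | h'
        · exact Or.inl ⟨h, h'⟩
        · exact Or.inr ⟨h, h'⟩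
    have hcardI : (Finset.Icc 1 (p-1)).card = p - 1 := by
      rw [Nat.card_Icc]; omega
    have hcu := Finset.card_union_of_disjoint hdisj
    rw [hunion, hcardI] at hcu
    omega
end

section
/- Let p > 3 be a prime with p ≡ 3 (mod 4), let k = ℚ(√-p) with a fixed embedding k ↪ ℂ, and set n = (p-1)/2. Let r be an integer with 0 < r < p and (r|p) = -1. Then there exists a nonzero element z of k (viewed in ℂ) such that Π_{1≤a≤p-1, (a|p)=+1} Γ(⟨ar/p⟩) = z · (2πi)^n / Π_{1≤a≤p-1, (a|p)=+1} Γ(a/p). -/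
open Finset Real Complex

lemma sin_prod' (p : ℕ) (hp : 1 < p) :
    ∏ k ∈ Finset.Icc 1 (p - 1), (2 * Real.sin (π * k / p)) = p := by
  have hp0 : (p : ℝ) ≠ 0 := by positivity
  have h : p = (p - 1) + 1 := (Nat.succ_pred_eq_of_pos (by omega)).symm
  have hζ : IsPrimitiveRoot (Complex.exp (2 * π * Complex.I / p)) ((p - 1) + 1) := by
    rw [← h]; exact Complex.isPrimitiveRoot_exp p (by omega)
  have key := hζ.prod_one_sub_pow_eq_order
  have hfac : ∀ k ∈ Finset.range (p - 1),
      (1 - Complex.exp (2 * π * Complex.I / p) ^ (k + 1))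
        = Complex.exp ((π * (k+1) / p : ℝ) * Complex.I)
          * (((2 : ℂ) * Real.sin (π * (k+1) / p)) * (-Complex.I)) := by
    intro k _
    rw [← Complex.exp_nat_mul]
    set θ : ℝ := π * (k+1) / p with hθ
    have h2 : ((k : ℂ) + 1) * (2 * π * Complex.I / p) = 2 * (θ : ℝ) * Complex.I := by
      rw [hθ]; push_cast; field_simp
    push_cast
    rw [h2, Complex.two_sin]
    have e1 : Complex.exp ((θ:ℂ)*Complex.I) * Complex.exp (-(θ:ℂ)*Complex.I) = 1 := by
      rw [← Complex.exp_add]; ring_nf; exact Complex.exp_zero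
    have e2 : Complex.exp ((θ:ℂ)*Complex.I) * Complex.exp ((θ:ℂ)*Complex.I)
        = Complex.exp (2*(θ:ℂ)*Complex.I) := by
      rw [← Complex.exp_add]; ring_nf
    linear_combination -e1 + e2 + (Complex.exp ((θ:ℂ)*Complex.I)*Complex.exp (-(θ:ℂ)*Complex.I)
      - Complex.exp ((θ:ℂ)*Complex.I)*Complex.exp ((θ:ℂ)*Complex.I)) * Complex.I_mul_I
  rw [Finset.prod_congr rfl hfac] at key
  have hcongr := congrArg (‖·‖) key
  rw [norm_prod] at hcongr
  simp only [norm_mul, Complex.norm_exp_ofReal_mul_I, one_mul, norm_neg, Complex.norm_I,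
    mul_one, Complex.norm_two, Complex.norm_real, Real.norm_eq_abs] at hcongr
  have habs : ∀ k ∈ Finset.range (p - 1),
      2 * |Real.sin (π * (k+1) / p)| = 2 * Real.sin (π * (1 + k) / p) := by
    intro k hk
    have hk' : k + 1 ≤ p - 1 := by simpa using Nat.succ_le_of_lt (Finset.mem_range.mp hk)
    have hs : 0 < Real.sin (π * (k+1) / p) := by
      apply Real.sin_pos_of_pos_of_lt_pi
      · positivity
      · rw [div_lt_iff₀ (by positivity)]
        have : ((k:ℝ) + 1) < p := by exact_mod_cast (by omega : k + 1 < p)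
        nlinarith [Real.pi_pos]
    rw [abs_of_pos hs, add_comm (1:ℝ)]
  rw [Finset.prod_congr rfl habs] at hcongr
  have hrhs : ‖(((p - 1 : ℕ) : ℂ) + 1)‖ = p := by
    rw [show (((p - 1 : ℕ) : ℂ) + 1) = (p : ℂ) by
      rw [Nat.cast_sub (by omega : 1 ≤ p)]; ring, Complex.norm_natCast]
  rw [hrhs] at hcongr
  rw [show Finset.Icc 1 (p - 1) = Finset.Ico 1 p by rw [← Finset.Ico_add_one_right_eq_Icc]; congr 1; omega,
    Finset.prod_Ico_eq_prod_range]
  simpa using hcongr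

lemma gamma_prod (p : ℕ) (hp : 1 < p) (hodd : p % 2 = 1) :
    ∏ a ∈ Finset.Icc 1 (p - 1), Real.Gamma (a / p) = (2 * π) ^ ((p - 1) / 2) / Real.sqrt p := by
  have hp0 : (0:ℝ) < p := by positivity
  set G := ∏ a ∈ Finset.Icc 1 (p - 1), Real.Gamma (a / p) with hG
  have hGpos : 0 < G := by
    apply Finset.prod_pos
    intro a ha
    have h1 : 1 ≤ a := (Finset.mem_Icc.mp ha).1
    exact Real.Gamma_pos_of_pos (by positivity)
  have hrev : ∏ a ∈ Finset.Icc 1 (p - 1), Real.Gamma (((p - a : ℕ) : ℝ) / p) = G := by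
    apply Finset.prod_nbij' (fun a => p - a) (fun a => p - a)
    · intro a ha
      rw [Finset.mem_Icc] at ha ⊢
      omega
    · intro a ha
      rw [Finset.mem_Icc] at ha ⊢
      omega
    · intro a ha
      rw [Finset.mem_Icc] at ha
      omega
    · intro a ha
      rw [Finset.mem_Icc] at ha
      omega
    · exact fun a ha => rfl
  have hsq : G * G = (2 * π) ^ (p - 1) / p := by
    calc G * G = ∏ a ∈ Finset.Icc 1 (p - 1),
          (Real.Gamma (a / p) * Real.Gamma (((p - a : ℕ) : ℝ) / p)) := by
            rw [Finset.prod_mul_distrib, hrev]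
      _ = ∏ a ∈ Finset.Icc 1 (p - 1), ((2 * π) / (2 * Real.sin (π * a / p))) := by
            apply Finset.prod_congr rfl
            intro a ha
            rw [Finset.mem_Icc] at ha
            have h1 : ((p - a : ℕ) : ℝ) / p = 1 - a / p := by
              rw [Nat.cast_sub (by omega)]
              field_simp
            rw [h1, Real.Gamma_mul_Gamma_one_sub]
            rw [show π * (a / p) = π * a / p by ring]
            ring
      _ = (∏ a ∈ Finset.Icc 1 (p - 1), (2*π)) /
            ∏ a ∈ Finset.Icc 1 (p - 1), (2 * Real.sin (π * a / p)) := by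
            rw [← Finset.prod_div_distrib]
      _ = (2 * π) ^ (p - 1) / p := by
            rw [sin_prod' p hp, Finset.prod_const, Nat.card_Icc]
            simp
  set b := (2 * π) ^ ((p - 1) / 2) / Real.sqrt p with hb
  have hbpos : 0 < b := by
    apply div_pos (by positivity) (Real.sqrt_pos.mpr hp0)
  have hbb : b * b = (2 * π) ^ (p - 1) / p := by
    rw [hb, div_mul_div_comm, ← pow_add, Real.mul_self_sqrt hp0.le]
    congr 2
    omega
  nlinarith [hsq, hbb, hGpos, hbpos]

/-- Let `p > 3` be a prime with `p ≡ 3 (mod 4)`, `k = ℚ(√-p) ⊆ ℂ` (via the embedding sending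
`√-p` to `i√p`), and `n = (p-1)/2`. If `0 < r < p` and `(r|p) = -1`, then there is a nonzero
`z ∈ k` with `∏_{(a|p)=1} Γ(⟨ar/p⟩) = z · (2πi)^n / ∏_{(a|p)=1} Γ(a/p)`. -/
theorem prod_Gamma_fract_nonresidue (p : ℕ) [Fact p.Prime]
    (hp4 : p % 4 = 3) (hp : 3 < p) (n : ℕ) (hn : n = (p - 1) / 2)
    (r : ℕ) (hr0 : 0 < r) (hrp : r < p) (hr : legendreSym p r = -1) :
    ∃ z : ℂ, z ≠ 0 ∧
      z ∈ Algebra.adjoin ℚ ({Complex.I * Real.sqrt p} : Set ℂ) ∧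
      ∏ a ∈ (Finset.Icc 1 (p - 1)).filter (fun a : ℕ => legendreSym p a = 1),
          Complex.Gamma ((Int.fract ((a * r : ℝ) / p) : ℝ) : ℂ)
        = z * (2 * (Real.pi : ℂ) * Complex.I) ^ n /
            ∏ a ∈ (Finset.Icc 1 (p - 1)).filter (fun a : ℕ => legendreSym p a = 1),
              Complex.Gamma (((a : ℝ) / p : ℝ) : ℂ) := by
  have hpp : p.Prime := Fact.out
  have hp1 : 1 < p := by omega
  have hodd : p % 2 = 1 := by omega
  have hp0R : (0:ℝ) < p := by positivity
  have hp0C : (p:ℂ) ≠ 0 := by exact_mod_cast (by positivity : (p:ℝ) ≠ 0)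
  have hs0R : (0:ℝ) < Real.sqrt p := Real.sqrt_pos.mpr hp0R
  have hs0C : ((Real.sqrt p : ℝ) : ℂ) ≠ 0 := by exact_mod_cast hs0R.ne'
  have hnodd : n % 2 = 1 := by omega
  -- basic ZMod facts
  have hcastinj : ∀ x y : ℕ, x < p → y < p → ((x : ZMod p) = y) → x = y := by
    intro x y hx hy h
    have := congrArg ZMod.val h
    rwa [ZMod.val_cast_of_lt hx, ZMod.val_cast_of_lt hy] at this
  have hne0 : ∀ x : ℕ, 0 < x → x < p → ((x : ZMod p) ≠ 0) := by
    intro x hx hxp h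
    rw [ZMod.natCast_eq_zero_iff] at h
    exact absurd (Nat.le_of_dvd hx h) (by omega)
  have hlegmod : ∀ x : ℕ, legendreSym p (((x % p : ℕ)) : ℤ) = legendreSym p x := by
    intro x
    rw [Int.natCast_mod]
    exact (legendreSym.mod p x).symm
  have hlegmul : ∀ x y : ℕ, legendreSym p (((x * y : ℕ)) : ℤ)
      = legendreSym p x * legendreSym p y := by
    intro x y
    push_cast
    exact legendreSym.mul p x y
  have hrne : ((r : ZMod p) ≠ 0) := hne0 r hr0 hrp
  -- the inverse of r mod p
  set r' : ℕ := ((r : ZMod p)⁻¹).val with hr'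
  have hr'cast : ((r' : ℕ) : ZMod p) = (r : ZMod p)⁻¹ := by
    rw [hr']
    simp [ZMod.natCast_val, ZMod.cast_id]
  have hrr' : ((r : ZMod p)) * ((r' : ℕ) : ZMod p) = 1 := by
    rw [hr'cast, mul_inv_cancel₀ hrne]
  have hr'ne : ((r' : ℕ) : ZMod p) ≠ 0 := by
    rw [hr'cast]
    exact inv_ne_zero hrne
  have hr'lt : r' < p := ZMod.val_lt _
  have hr'0 : 0 < r' := by
    rcases Nat.eq_zero_or_pos r' with h | h
    · exfalso; apply hr'ne; rw [h]; simp
    · exact h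
  have hlegr' : legendreSym p r' = -1 := by
    have h1 : legendreSym p ((r * r' : ℕ)) = 1 := by
      rw [← hlegmod]
      have : ((r * r') % p : ℕ) = 1 % p := by
        have : ((((r * r') % p : ℕ)) : ZMod p) = ((1 % p : ℕ) : ZMod p) := by
          rw [ZMod.natCast_mod, ZMod.natCast_mod]
          push_cast
          rw [hrr']
        exact hcastinj _ _ (Nat.mod_lt _ (by omega)) (Nat.mod_lt _ (by omega)) this
      rw [this]
      rw [Nat.mod_eq_of_lt (by omega)]
      exact legendreSym.at_one p
    rw [hlegmul] at h1
    rw [hr] at h1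
    linarith

  have hzkey : (((-1:ℂ))^((n+1)/2) * (Complex.I * (Real.sqrt p : ℝ)) / p) * (2*(π:ℂ)*Complex.I)^n
      = (((2*π)^n / Real.sqrt p : ℝ) : ℂ) := by
    set m := (n+1)/2 with hmdef
    have hI : Complex.I ^ (n+1) = (-1:ℂ)^m := by
      rw [show n+1 = 2*m by omega, pow_mul, Complex.I_sq]
    have hm1 : ((-1:ℂ))^m * ((-1:ℂ))^m = 1 := by
      rw [← pow_add, ← two_mul, pow_mul]
      norm_num
    have hsq : ((Real.sqrt p : ℝ):ℂ) * ((Real.sqrt p : ℝ):ℂ) = (p:ℂ) := by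
      rw [← Complex.ofReal_mul, Real.mul_self_sqrt hp0R.le]
      norm_cast
    push_cast
    rw [mul_pow]
    have hIn : Complex.I * Complex.I ^ n = (-1:ℂ)^m := by
      rw [← pow_succ', hI]
    field_simp
    linear_combination ((-1:ℂ))^m * ((Real.sqrt p : ℝ):ℂ) * ((Real.sqrt p : ℝ):ℂ) * hIn
      + ((Real.sqrt p : ℝ):ℂ) * ((Real.sqrt p : ℝ):ℂ) * hm1
      + hsq

  have hzne : ∀ a : ℕ, 0 < a → a < p → (((a:ℤ) : ZMod p) ≠ 0) := by
    intro a h1 h2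
    rw [Int.cast_natCast]
    exact hne0 a h1 h2
  have hmodpos : ∀ x y : ℕ, 0 < x → x < p → 0 < y → y < p → 0 < (x * y) % p := by
    intro x y hx hxp hy hyp
    rcases Nat.eq_zero_or_pos ((x * y) % p) with h | h
    · exfalso
      have hdvd := Nat.dvd_of_mod_eq_zero h
      rcases (Nat.Prime.dvd_mul hpp).mp hdvd with h' | h'
      · exact absurd (Nat.le_of_dvd hx h') (by omega)
      · exact absurd (Nat.le_of_dvd hy h') (by omega)
    · exact h
  set T1 := (Finset.Icc 1 (p - 1)).filter (fun a : ℕ => legendreSym p a = 1) with hT1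
  set T2 := (Finset.Icc 1 (p - 1)).filter (fun a : ℕ => legendreSym p a = -1) with hT2
  set A := ∏ a ∈ T1, Real.Gamma (a / p) with hA
  set B := ∏ a ∈ T2, Real.Gamma (a / p) with hB
  have hApos : 0 < A := by
    apply Finset.prod_pos
    intro a ha
    have h1 : 1 ≤ a := (Finset.mem_Icc.mp (Finset.mem_filter.mp ha).1).1
    exact Real.Gamma_pos_of_pos (by positivity)
  have hBpos : 0 < B := by
    apply Finset.prod_pos
    intro a ha
    have h1 : 1 ≤ a := (Finset.mem_Icc.mp (Finset.mem_filter.mp ha).1).1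
    exact Real.Gamma_pos_of_pos (by positivity)
  have hAB : A * B = (2 * π) ^ n / Real.sqrt p := by
    rw [hA, hB, hT1, hT2]
    rw [show ((Finset.Icc 1 (p - 1)).filter (fun a : ℕ => legendreSym p a = -1))
        = (Finset.Icc 1 (p - 1)).filter (fun a : ℕ => ¬ (legendreSym p a = 1)) by
      apply Finset.filter_congr
      intro a ha
      rw [Finset.mem_Icc] at ha
      rcases legendreSym.eq_one_or_neg_one p (hzne a (by omega) (by omega)) with h | h <;>
        simp [h]]
    rw [Finset.prod_filter_mul_prod_filter_not (Finset.Icc 1 (p-1))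
      (fun a : ℕ => legendreSym p a = 1) (fun a : ℕ => Real.Gamma (a / p))]
    rw [gamma_prod p hp1 hodd, hn]
  have hmem1 : ∀ a ∈ T1, (a * r) % p ∈ T2 := by
    intro a ha
    rw [hT1, Finset.mem_filter, Finset.mem_Icc] at ha
    obtain ⟨⟨ha1, ha2⟩, haleg⟩ := ha
    rw [hT2, Finset.mem_filter, Finset.mem_Icc]
    have hpos := hmodpos a r (by omega) (by omega) hr0 hrp
    refine ⟨⟨by omega, by have := Nat.mod_lt (a * r) (show 0 < p by omega); omega⟩, ?_⟩
    rw [hlegmod, hlegmul, haleg, hr]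
    norm_num
  have hmem2 : ∀ b ∈ T2, (b * r') % p ∈ T1 := by
    intro b hb
    rw [hT2, Finset.mem_filter, Finset.mem_Icc] at hb
    obtain ⟨⟨hb1, hb2⟩, hbleg⟩ := hb
    rw [hT1, Finset.mem_filter, Finset.mem_Icc]
    have hpos := hmodpos b r' (by omega) (by omega) hr'0 hr'lt
    refine ⟨⟨by omega, by have := Nat.mod_lt (b * r') (show 0 < p by omega); omega⟩, ?_⟩
    rw [hlegmod, hlegmul, hbleg, hlegr']
    norm_num
  have hli : ∀ a ∈ T1, ((a * r) % p * r') % p = a := by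
    intro a ha
    rw [hT1, Finset.mem_filter, Finset.mem_Icc] at ha
    apply hcastinj _ _ (Nat.mod_lt _ (by omega)) (by omega)
    push_cast [ZMod.natCast_mod]
    rw [mul_assoc, hrr', mul_one]
  have hri : ∀ b ∈ T2, ((b * r') % p * r) % p = b := by
    intro b hb
    rw [hT2, Finset.mem_filter, Finset.mem_Icc] at hb
    apply hcastinj _ _ (Nat.mod_lt _ (by omega)) (by omega)
    push_cast [ZMod.natCast_mod]
    rw [mul_assoc, mul_comm ((r':ℕ) : ZMod p), hrr', mul_one]
  have hbij : ∏ a ∈ T1, Real.Gamma ((((a * r) % p : ℕ) : ℝ) / p) = B := by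
    exact Finset.prod_nbij' (fun a => (a * r) % p) (fun b => (b * r') % p)
      hmem1 hmem2 hli hri (fun a _ => rfl)
  -- complex translations
  have hLHS : ∏ a ∈ T1, Complex.Gamma ((Int.fract ((a * r : ℝ) / p) : ℝ) : ℂ) = (B : ℂ) := by
    rw [← hbij]
    push_cast [← Complex.Gamma_ofReal]
    apply Finset.prod_congr rfl
    intro a _
    congr 1
    rw [show ((a : ℝ) * r) = ((a * r : ℕ) : ℝ) by push_cast; ring,
      Int.fract_div_natCast_eq_div_natCast_mod]
    push_cast
    ring
  have hRHS : ∏ a ∈ T1, Complex.Gamma (((a : ℝ) / p : ℝ) : ℂ) = (A : ℂ) := by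
    rw [hA]
    push_cast [← Complex.Gamma_ofReal]
    rfl
  refine ⟨((-1:ℂ))^((n+1)/2) * (Complex.I * (Real.sqrt p : ℝ)) / p, ?_, ?_, ?_⟩
  · apply div_ne_zero _ hp0C
    apply mul_ne_zero (pow_ne_zero _ (by norm_num))
    exact mul_ne_zero Complex.I_ne_zero hs0C
  · have : ((-1:ℂ))^((n+1)/2) * (Complex.I * (Real.sqrt p : ℝ)) / p
        = (((-1:ℚ))^((n+1)/2) / p) • (Complex.I * (Real.sqrt p : ℝ)) := by
      rw [Rat.smul_def]
      push_cast
      ring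
    rw [this]
    exact Subalgebra.smul_mem _ (Algebra.self_mem_adjoin_singleton ℚ _) _
  · rw [hLHS, hRHS, hzkey]
    rw [eq_div_iff (by exact_mod_cast hApos.ne')]
    rw [← Complex.ofReal_mul]
    norm_cast
    rw [mul_comm] at hAB
    rw [hAB]
end

section
/- Let p > 3 be a prime with p ≡ 3 (mod 4) and let k = ℚ(√-p) with a fixed embedding k ↪ ℂ. Let r, s, t be integers with 0 < r, s, t < p and r + s + t = p, and suppose (r|p) + (s|p) + (t|p) = 1. Then there exists a nonzero element z of k (viewed in ℂ) such that Π_{1≤a≤p-1, (a|p)=+1} B(⟨ar/p⟩, ⟨as/p⟩) = z · Π_{1≤a≤p-1, (a|p)=+1} Γ(a/p), where B is Euler's beta function. -/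
open Finset
namespace ProdBetaAux

lemma fract_nat_div (m n : ℕ) (hn : 0 < n) :
    Int.fract ((m : ℝ) / n) = ((m % n : ℕ) : ℝ) / n := by
  have hn' : (n : ℝ) ≠ 0 := by positivity
  conv_lhs => rw [← Nat.div_add_mod m n]
  push_cast
  rw [add_div, mul_div_cancel_left₀ _ hn', Int.fract_natCast_add,
    Int.fract_eq_self.mpr]
  refine ⟨by positivity, ?_⟩
  rw [div_lt_one (by positivity)]
  exact_mod_cast Nat.mod_lt m hn

variable (p : ℕ) [Fact p.Prime]

lemma eq_of_cast_eq {x y : ℕ} (hx : x < p) (hy : y < p) (h : (x : ZMod p) = y) : x = y := by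
  haveI : NeZero p := ⟨(Fact.out : p.Prime).pos.ne'⟩
  have := congrArg ZMod.val h
  rwa [ZMod.val_cast_of_lt hx, ZMod.val_cast_of_lt hy] at this

lemma leg_congr {x y : ℤ} (h : (x : ZMod p) = y) : legendreSym p x = legendreSym p y := by
  simp only [legendreSym, h]

lemma leg_nat_mod (a : ℕ) : legendreSym p ((a % p : ℕ)) = legendreSym p a := by
  refine leg_congr p ?_
  push_cast [ZMod.natCast_mod]
  rfl

lemma leg_mul_mod (a c : ℕ) :
    legendreSym p ((a * c % p : ℕ)) = legendreSym p a * legendreSym p c := by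
  rw [leg_nat_mod]
  have := legendreSym.mul p (a : ℤ) (c : ℤ)
  rw [← this]
  norm_cast

lemma not_dvd_of_mem {a : ℕ} (ha : 0 < a) (ha' : a < p) : ¬ p ∣ a :=
  fun h => absurd (Nat.eq_zero_of_dvd_of_lt h ha') ha.ne'

lemma mod_mem {a c : ℕ} (ha : ¬ p ∣ a) (hc : ¬ p ∣ c) : a * c % p ∈ Icc 1 (p - 1) := by
  have hp2 : 2 ≤ p := (Fact.out : p.Prime).two_le
  have h1 : a * c % p < p := Nat.mod_lt _ (by omega)
  have h0 : a * c % p ≠ 0 := by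
    intro h
    exact (((Fact.out : p.Prime).dvd_mul).mp (Nat.dvd_of_mod_eq_zero h)).elim ha hc
  simp only [mem_Icc]
  omega

lemma leg_ne_zero {c : ℕ} (hc : ¬ p ∣ c) : legendreSym p c ≠ 0 := by
  rw [Ne, legendreSym.eq_zero_iff]
  intro h
  rw [show ((c : ℤ) : ZMod p) = ((c : ℕ) : ZMod p) by push_cast; rfl,
    ZMod.natCast_eq_zero_iff] at h
  exact hc h

lemma prod_reindex (c : ℕ) (hc0 : 0 < c) (hcp : c < p) (F : ℕ → ℂ) :
    ∏ a ∈ (Icc 1 (p - 1)).filter (fun a : ℕ => legendreSym p a = 1), F (a * c % p)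
      = ∏ b ∈ (Icc 1 (p - 1)).filter (fun b : ℕ => legendreSym p b = legendreSym p c), F b := by
  haveI : NeZero p := ⟨(Fact.out : p.Prime).pos.ne'⟩
  have hpc : ¬ p ∣ c := not_dvd_of_mem p hc0 hcp
  have hcz : (c : ZMod p) ≠ 0 := fun h => hpc ((ZMod.natCast_eq_zero_iff _ _).mp h)
  set c' : ℕ := ((c : ZMod p)⁻¹).val with hc'
  have hc'cast : ((c' : ℕ) : ZMod p) = (c : ZMod p)⁻¹ := by
    simp [hc', ZMod.natCast_val, ZMod.cast_id]
  have hcc' : ((c * c' : ℕ) : ZMod p) = 1 := by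
    push_cast [hc'cast]
    exact mul_inv_cancel₀ hcz
  have hpc' : ¬ p ∣ c' := by
    intro h
    have h2 : ((c' : ℕ) : ZMod p) = 0 := (ZMod.natCast_eq_zero_iff _ _).mpr h
    rw [hc'cast] at h2
    exact inv_ne_zero hcz h2
  have hmemd : ∀ a ∈ (Icc 1 (p - 1)).filter (fun a : ℕ => legendreSym p a = 1), ¬ p ∣ a := by
    intro a ha
    simp only [mem_filter, mem_Icc] at ha
    exact not_dvd_of_mem p (by omega) (by have := (Fact.out : p.Prime).two_le; omega)
  refine Finset.prod_nbij' (fun a => a * c % p) (fun b => b * c' % p) ?_ ?_ ?_ ?_ ?_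
  · intro a ha
    have hpa := hmemd a ha
    simp only [mem_filter, mem_Icc] at ha ⊢
    refine ⟨by simpa [mem_Icc] using mod_mem p hpa hpc, ?_⟩
    rw [leg_mul_mod, ha.2, one_mul]
  · intro b hb
    have hp2 := (Fact.out : p.Prime).two_le
    simp only [mem_filter, mem_Icc] at hb ⊢
    have hpb : ¬ p ∣ b := not_dvd_of_mem p (by omega) (by omega)
    refine ⟨by simpa [mem_Icc] using mod_mem p hpb hpc', ?_⟩
    rw [leg_mul_mod, hb.2]
    have h1 : legendreSym p c * legendreSym p c' = 1 := by
      have := legendreSym.mul p (c : ℤ) (c' : ℤ)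
      rw [show ((c : ℤ) * c') = ((c * c' : ℕ) : ℤ) by push_cast; ring] at this
      rw [← this, leg_congr p (x := ((c * c' : ℕ) : ℤ)) (y := 1)
        (by rw [Int.cast_natCast, hcc']; norm_num)]
      exact legendreSym.at_one p
    exact h1
  · intro a ha
    have hpa := hmemd a ha
    simp only [mem_filter, mem_Icc] at ha
    have h2 := (Fact.out : p.Prime).two_le
    refine eq_of_cast_eq p (Nat.mod_lt _ (by omega)) (by omega) ?_
    push_cast [ZMod.natCast_mod]
    rw [mul_assoc]
    rw [show ((c : ZMod p) * c' ) = ((c * c' : ℕ) : ZMod p) by push_cast; rfl, hcc', mul_one]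
  · intro b hb
    simp only [mem_filter, mem_Icc] at hb
    have h2 := (Fact.out : p.Prime).two_le
    refine eq_of_cast_eq p (Nat.mod_lt _ (by omega)) (by omega) ?_
    push_cast [ZMod.natCast_mod]
    rw [mul_assoc]
    rw [show ((c' : ZMod p) * c ) = ((c * c' : ℕ) : ZMod p) by push_cast; ring, hcc', mul_one]
  · intro a _
    rfl


lemma beta_term (n m l : ℕ) (hn : 0 < n) (hm : 0 < m) (hl : 0 < l)
    (hlp : l < p)
    (hsum : n + m + l = p ∨ n + m + l = 2 * p) :
    Complex.betaIntegral (((n : ℝ) / p : ℝ) : ℂ) (((m : ℝ) / p : ℝ) : ℂ)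
      = ((if n + m + l = p then (1 : ℚ) else (p : ℚ) / ((p - l : ℕ) : ℚ)) : ℂ) *
        (Complex.Gamma (((n : ℝ) / p : ℝ) : ℂ) * Complex.Gamma (((m : ℝ) / p : ℝ) : ℂ)
          / Complex.Gamma ((((p - l : ℕ) : ℝ) / p : ℝ) : ℂ)) := by
  have hp0 : (0:ℝ) < p := by exact_mod_cast (Fact.out : p.Prime).pos
  have hn' : (0:ℝ) < n := by exact_mod_cast hn
  have hm' : (0:ℝ) < m := by exact_mod_cast hm
  have hpl : (0:ℝ) < ((p - l : ℕ) : ℝ) := by exact_mod_cast Nat.sub_pos_of_lt hlp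
  have hu : 0 < (Complex.ofReal ((n : ℝ) / p)).re := by
    rw [Complex.ofReal_re]; positivity
  have hv : 0 < (Complex.ofReal ((m : ℝ) / p)).re := by
    rw [Complex.ofReal_re]; positivity
  have hre : 0 < (Complex.ofReal ((n : ℝ) / p) + Complex.ofReal ((m : ℝ) / p)).re := by
    rw [Complex.add_re, Complex.ofReal_re, Complex.ofReal_re]; positivity
  have hne : Complex.Gamma (Complex.ofReal ((n : ℝ) / p) + Complex.ofReal ((m : ℝ) / p)) ≠ 0 :=
    Complex.Gamma_ne_zero_of_re_pos hre
  have hB : Complex.betaIntegral (((n : ℝ) / p : ℝ) : ℂ) (((m : ℝ) / p : ℝ) : ℂ)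
      = Complex.Gamma (((n : ℝ) / p : ℝ) : ℂ) * Complex.Gamma (((m : ℝ) / p : ℝ) : ℂ)
        / Complex.Gamma (Complex.ofReal ((n : ℝ) / p) + Complex.ofReal ((m : ℝ) / p)) := by
    rw [eq_div_iff hne, mul_comm]
    exact (Complex.Gamma_mul_Gamma_eq_betaIntegral hu hv).symm
  rcases hsum with h | h
  · rw [if_pos h, hB]
    have hnm : (n : ℝ) + m = ((p - l : ℕ) : ℝ) := by
      have : n + m = p - l := by omega
      exact_mod_cast congrArg (Nat.cast : ℕ → ℝ) this
    rw [show Complex.ofReal ((n : ℝ) / p) + Complex.ofReal ((m : ℝ) / p)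
        = ((((n:ℝ) + m) / p : ℝ) : ℂ) by push_cast; ring, hnm]
    push_cast
    ring
  · rw [if_neg (by omega), hB]
    have hnm : (n : ℝ) + m = ((p - l : ℕ) : ℝ) + p := by
      have : n + m = (p - l) + p := by omega
      exact_mod_cast congrArg (Nat.cast : ℕ → ℝ) this
    have hx0 : (((((p - l : ℕ) : ℝ)) / p : ℝ) : ℂ) ≠ 0 := by
      rw [Complex.ofReal_ne_zero]
      positivity
    have hgx : Complex.Gamma (((((p - l : ℕ) : ℝ)) / p : ℝ) : ℂ) ≠ 0 := by
      apply Complex.Gamma_ne_zero_of_re_pos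
      rw [Complex.ofReal_re]; positivity
    rw [show Complex.ofReal ((n : ℝ) / p) + Complex.ofReal ((m : ℝ) / p)
        = ((((p - l : ℕ) : ℝ) / p : ℝ) : ℂ) + 1 by
        rw [show Complex.ofReal ((n : ℝ) / p) + Complex.ofReal ((m : ℝ) / p)
          = ((((n:ℝ) + m) / p : ℝ) : ℂ) by push_cast; ring, hnm]
        push_cast
        rw [add_div, div_self (by exact_mod_cast hp0.ne' : (p:ℂ) ≠ 0)]]
    rw [Complex.Gamma_add_one _ hx0]
    have hplC : (((p - l : ℕ) : ℂ)) ≠ 0 := by exact_mod_cast hpl.ne'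
    have hpC : ((p : ℂ)) ≠ 0 := by exact_mod_cast hp0.ne'
    push_cast
    field_simp

end ProdBetaAux
open ProdBetaAux

/-- Let `p > 3` be a prime with `p ≡ 3 (mod 4)` and `k = ℚ(√-p) ⊆ ℂ` (via the embedding sending
`√-p` to `i√p`). If `r, s, t` are integers with `0 < r, s, t < p`, `r + s + t = p`, and
`(r|p) + (s|p) + (t|p) = 1`, then there is a nonzero `z ∈ k` with
`∏_{(a|p)=1} B(⟨ar/p⟩, ⟨as/p⟩) = z · ∏_{(a|p)=1} Γ(a/p)`,
where `B` is Euler's beta function. -/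
theorem prod_beta_fract_eq_prod_Gamma (p : ℕ) [Fact p.Prime]
    (hp4 : p % 4 = 3) (hp : 3 < p)
    (r s t : ℕ)
    (hr0 : 0 < r) (hrp : r < p) (hs0 : 0 < s) (hsp : s < p) (ht0 : 0 < t) (htp : t < p)
    (hsum : r + s + t = p)
    (heps : legendreSym p r + legendreSym p s + legendreSym p t = 1) :
    ∃ z : ℂ, z ≠ 0 ∧
      z ∈ Algebra.adjoin ℚ ({Complex.I * Real.sqrt p} : Set ℂ) ∧
      ∏ a ∈ (Finset.Icc 1 (p - 1)).filter (fun a : ℕ => legendreSym p a = 1),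
          Complex.betaIntegral ((Int.fract ((a * r : ℝ) / p) : ℝ) : ℂ)
            ((Int.fract ((a * s : ℝ) / p) : ℝ) : ℂ)
        = z * ∏ a ∈ (Finset.Icc 1 (p - 1)).filter (fun a : ℕ => legendreSym p a = 1),
              Complex.Gamma (((a : ℝ) / p : ℝ) : ℂ) := by
  classical
  have hprime : p.Prime := Fact.out
  have hp0 : 0 < p := hprime.pos
  set G : ℕ → ℂ := fun j => Complex.Gamma (((j : ℝ) / p : ℝ) : ℂ) with hG
  set Q : ℕ → ℚ := fun a =>
    if a * r % p + a * s % p + a * t % p = p then (1 : ℚ)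
    else (p : ℚ) / ((p - a * t % p : ℕ) : ℚ) with hQdef
  set S := (Finset.Icc 1 (p - 1)).filter (fun a : ℕ => legendreSym p a = 1) with hS
  have hGne : ∀ j : ℕ, 0 < j → G j ≠ 0 := by
    intro j hj
    apply Complex.Gamma_ne_zero_of_re_pos
    rw [Complex.ofReal_re]
    have : (0:ℝ) < j := by exact_mod_cast hj
    have : (0:ℝ) < p := by exact_mod_cast hp0
    positivity
  have hQne : ∀ a : ℕ, Q a ≠ 0 := by
    intro a
    rw [hQdef]
    dsimp only
    split
    · norm_num
    · apply div_ne_zero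
      · exact_mod_cast hp0.ne'
      · have : 0 < p - a * t % p := Nat.sub_pos_of_lt (Nat.mod_lt _ hp0)
        exact_mod_cast this.ne'
  -- per-element facts
  have hmods : ∀ a ∈ S, ∀ c : ℕ, 0 < c → c < p →
      (0 < a * c % p ∧ a * c % p < p) := by
    intro a ha c hc0 hcp
    simp only [hS, mem_filter, mem_Icc] at ha
    have hpa : ¬ p ∣ a := not_dvd_of_mem p (by omega) (by omega)
    have hpc : ¬ p ∣ c := not_dvd_of_mem p hc0 hcp
    have := mod_mem p hpa hpc
    simp only [mem_Icc] at this
    constructor <;> omega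
  have hsumtwo : ∀ a ∈ S, a * r % p + a * s % p + a * t % p = p ∨
      a * r % p + a * s % p + a * t % p = 2 * p := by
    intro a ha
    have h1 := hmods a ha r hr0 hrp
    have h2 := hmods a ha s hs0 hsp
    have h3 := hmods a ha t ht0 htp
    have hdvd : p ∣ (a * r % p + a * s % p + a * t % p) := by
      haveI : NeZero p := ⟨hp0.ne'⟩
      rw [← ZMod.natCast_eq_zero_iff]
      push_cast [ZMod.natCast_mod]
      have hz : ((r + s + t : ℕ) : ZMod p) = 0 := by rw [hsum]; exact ZMod.natCast_self p
      push_cast at hz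
      linear_combination (a : ZMod p) * hz
    obtain ⟨k, hk⟩ := hdvd
    have hkub : p * k ≤ 3 * p - 3 := by rw [← hk]; omega
    have hklb : 3 ≤ p * k := by rw [← hk]; omega
    have hk3 : k < 3 := by
      by_contra hc
      push_neg at hc
      have : p * 3 ≤ p * k := Nat.mul_le_mul_left p hc
      omega
    have hk0 : 0 < k := by
      by_contra hc
      push_neg at hc
      interval_cases k
      omega
    interval_cases k
    · left; omega
    · right; omega
  -- step 1: rewrite each beta factor
  have step1 : ∀ a ∈ S,
      Complex.betaIntegral ((Int.fract ((a * r : ℝ) / p) : ℝ) : ℂ)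
          ((Int.fract ((a * s : ℝ) / p) : ℝ) : ℂ)
        = ((Q a : ℚ) : ℂ) * (G (a * r % p) * G (a * s % p) / G (p - a * t % p)) := by
    intro a ha
    have e1 : Int.fract ((a : ℝ) * r / p) = ((a * r % p : ℕ) : ℝ) / p := by
      rw [show ((a : ℝ) * r) = ((a * r : ℕ) : ℝ) by push_cast; ring]
      exact fract_nat_div _ _ hp0
    have e2 : Int.fract ((a : ℝ) * s / p) = ((a * s % p : ℕ) : ℝ) / p := by
      rw [show ((a : ℝ) * s) = ((a * s : ℕ) : ℝ) by push_cast; ring]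
      exact fract_nat_div _ _ hp0
    rw [e1, e2, beta_term p (a * r % p) (a * s % p) (a * t % p)
      (hmods a ha r hr0 hrp).1 (hmods a ha s hs0 hsp).1 (hmods a ha t ht0 htp).1
      (hmods a ha t ht0 htp).2 (hsumtwo a ha), hQdef, hG]
    dsimp only
    split_ifs <;> push_cast <;> ring
  -- index identity p - a*t%p = a*(p-t)%p
  have hidx : ∀ a ∈ S, p - a * t % p = a * (p - t) % p := by
    intro a ha
    haveI : NeZero p := ⟨hp0.ne'⟩
    have h3 := hmods a ha t ht0 htp
    refine eq_of_cast_eq p (by omega) (Nat.mod_lt _ hp0) ?_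
    push_cast [ZMod.natCast_mod, Nat.cast_sub htp.le, Nat.cast_sub h3.2.le]
    rw [ZMod.natCast_self]
    ring
  have hpt0 : 0 < p - t := by omega
  have hptp : p - t < p := by omega
  haveI : NeZero p := ⟨hp0.ne'⟩
  have hlegpt : legendreSym p ((p - t : ℕ)) = - legendreSym p t := by
    have h1 : (((p - t : ℕ) : ℤ) : ZMod p) = ((-(t : ℤ) : ℤ) : ZMod p) := by
      push_cast [Nat.cast_sub htp.le]
      simp [ZMod.natCast_self]
    rw [leg_congr p h1, show (-(t : ℤ)) = (-1) * t by ring, legendreSym.mul,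
      legendreSym.at_neg_one (by omega), ZMod.χ₄_nat_three_mod_four hp4]
    ring
  have hlegpm : ∀ c : ℕ, 0 < c → c < p → legendreSym p c = 1 ∨ legendreSym p c = -1 := by
    intro c hc0 hcp
    apply legendreSym.eq_one_or_neg_one
    rw [show ((c : ℤ) : ZMod p) = ((c : ℕ) : ZMod p) by push_cast; rfl]
    rw [Ne, ZMod.natCast_eq_zero_iff]
    exact not_dvd_of_mem p hc0 hcp
  have hprodne : ∀ ε : ℤ,
      ∏ b ∈ (Finset.Icc 1 (p - 1)).filter (fun b : ℕ => legendreSym p b = ε), G b ≠ 0 := by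
    intro ε
    rw [Finset.prod_ne_zero_iff]
    intro b hb
    simp only [mem_filter, mem_Icc] at hb
    exact hGne b (by omega)
  refine ⟨((∏ a ∈ S, Q a : ℚ) : ℂ), ?_, ?_, ?_⟩
  · rw [Rat.cast_ne_zero]
    exact Finset.prod_ne_zero_iff.mpr fun a _ => hQne a
  · rw [show ((∏ a ∈ S, Q a : ℚ) : ℂ) = algebraMap ℚ ℂ (∏ a ∈ S, Q a) from
      (eq_ratCast (algebraMap ℚ ℂ) _).symm]
    exact Subalgebra.algebraMap_mem _ _
  · rw [Finset.prod_congr rfl step1, Finset.prod_mul_distrib, Finset.prod_div_distrib,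
      Finset.prod_mul_distrib,
      Finset.prod_congr rfl (fun a ha => congrArg G (hidx a ha)),
      show ((∏ a ∈ S, Q a : ℚ) : ℂ) = ∏ a ∈ S, ((Q a : ℚ) : ℂ) by push_cast; rfl,
      hS, prod_reindex p r hr0 hrp G, prod_reindex p s hs0 hsp G,
      prod_reindex p (p - t) hpt0 hptp G, hlegpt]
    rcases hlegpm r hr0 hrp with her | her <;>
      rcases hlegpm s hs0 hsp with hes | hes <;>
        rcases hlegpm t ht0 htp with het | het <;>
          simp only [her, hes, het, neg_neg] at heps ⊢ <;>
            try (exfalso; omega)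
    · -- er = 1, es = 1, et = -1
      rw [mul_div_cancel_right₀ _ (hprodne 1)]
    · -- er = 1, es = -1, et = 1
      rw [mul_div_cancel_right₀ _ (hprodne (-1))]
    · -- er = -1, es = 1, et = 1
      rw [mul_comm (∏ b ∈ (Finset.Icc 1 (p - 1)).filter
            (fun b : ℕ => legendreSym p b = -1), G b),
        mul_div_cancel_right₀ _ (hprodne (-1))]
end

section
/- Let p > 3 be a prime with p ≡ 3 (mod 4), let k = ℚ(√-p) with ring of integers 𝒪, and let h be the class number of k. Then for every nonzero ideal 𝔞 of 𝒪 coprime to p, the ideal 𝔞^h is principal, and among its generators there is exactly one generator β whose image in the residue field 𝒪/(√-p) ≅ 𝔽_p is a nonzero square. -/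
open Polynomial NumberField
open scoped nonZeroDivisors

lemma sq_dichotomy (F : Type*) [Field F] [Fintype F] (hF : Fintype.card F % 4 = 3)
    (x : F) (hx : x ≠ 0) : IsSquare x ↔ ¬ IsSquare (-x) := by
  classical
  have hneg1 : ¬ IsSquare (-1 : F) := by
    rw [FiniteField.isSquare_neg_one_iff]; simp [hF]
  constructor
  · rintro ⟨r, hr⟩ ⟨s, hs⟩
    have hr0 : r ≠ 0 := by rintro rfl; rw [hr] at hx; simp at hx
    refine hneg1 ⟨s * r⁻¹, ?_⟩
    have : (s * r⁻¹) * (s * r⁻¹) = (s*s) * (r*r)⁻¹ := by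
      field_simp
    rw [this, ← hs, ← hr]
    field_simp
  · intro hnx
    have hx' : (-x) ≠ 0 := neg_ne_zero.mpr hx
    have h1 : quadraticChar F (-x) = -1 := quadraticChar_neg_one_iff_not_isSquare.mpr hnx
    have h2 : quadraticChar F x * quadraticChar F (-x) = quadraticChar F (-1) := by
      rw [← map_mul]
      have : x * -x = -1 * x ^ 2 := by ring
      rw [this, map_mul, quadraticChar_sq_one' hx, mul_one]
    have h3 : quadraticChar F (-1) = -1 := quadraticChar_neg_one_iff_not_isSquare.mpr hneg1
    rw [h1, h3] at h2
    have h4 : quadraticChar F x = 1 := by omega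
    exact (quadraticChar_one_iff_isSquare hx).mp h4

variable (p : ℕ) [Fact p.Prime] (K : Type) [Field K] [NumberField K] (α : K)

lemma minpoly_alpha (hα : α ^ 2 = -(p : K)) : minpoly ℚ α = X ^ 2 + C (p : ℚ) := by
  have hirr : Irreducible (X ^ 2 - C (-(p : ℚ))) := by
    apply X_pow_sub_C_irreducible_of_prime Nat.prime_two
    intro b hb
    have : (0:ℚ) < p := by exact_mod_cast (Fact.out : p.Prime).pos
    nlinarith [sq_nonneg b, hb]
  have heq : X ^ 2 - C (-(p : ℚ)) = X ^ 2 + C (p : ℚ) := by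
    rw [map_neg, sub_neg_eq_add]
  rw [heq] at hirr
  have haev : Polynomial.aeval α (X ^ 2 + C (p : ℚ)) = 0 := by simp [hα]
  exact (minpoly.eq_of_irreducible_of_monic hirr haev (monic_X_pow_add_C _ (by norm_num))).symm

lemma repr_exists (hgen : Algebra.adjoin ℚ ({α} : Set K) = ⊤) (hα : α ^ 2 = -(p : K)) (x : K) :
    ∃ a b : ℚ, x = algebraMap ℚ K a + algebraMap ℚ K b * α := by
  have hx : x ∈ Algebra.adjoin ℚ ({α} : Set K) := hgen ▸ trivial
  induction hx using Algebra.adjoin_induction with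
  | mem y hy =>
    rcases hy with rfl
    exact ⟨0, 1, by simp⟩
  | algebraMap q => exact ⟨q, 0, by simp⟩
  | add y z hy hz ihy ihz =>
    obtain ⟨a, b, rfl⟩ := ihy
    obtain ⟨c, d, rfl⟩ := ihz
    exact ⟨a + c, b + d, by push_cast [map_add]; ring⟩
  | mul y z hy hz ihy ihz =>
    obtain ⟨a, b, rfl⟩ := ihy
    obtain ⟨c, d, rfl⟩ := ihz
    refine ⟨a * c - p * (b * d), a * d + b * c, ?_⟩
    push_cast [map_sub, map_add, map_mul, map_natCast]
    linear_combination (algebraMap ℚ K b * algebraMap ℚ K d) * hα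

lemma alpha_not_rat (hα : α ^ 2 = -(p : K)) (q : ℚ) : algebraMap ℚ K q ≠ α := by
  intro h
  have h2 : algebraMap ℚ K (q ^ 2) = -(p:K) := by rw [map_pow, h, hα]
  have h3 : algebraMap ℚ K (q ^ 2) = algebraMap ℚ K (-(p:ℚ)) := by
    rw [h2]; push_cast; ring
  have h4 : q ^ 2 = -(p:ℚ) := (algebraMap ℚ K).injective h3
  have : (0:ℚ) < p := by exact_mod_cast (Fact.out : p.Prime).pos
  nlinarith [sq_nonneg q]

lemma repr_unique (hα : α ^ 2 = -(p : K)) (a b : ℚ)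
    (h : algebraMap ℚ K a + algebraMap ℚ K b * α = 0) : a = 0 ∧ b = 0 := by
  by_cases hb : b = 0
  · subst hb
    simp at h
    exact ⟨by simpa using (algebraMap ℚ K).injective (by simpa using h : algebraMap ℚ K a = algebraMap ℚ K 0), rfl⟩
  · exfalso
    apply alpha_not_rat p K α hα (-a / b)
    have hbK : algebraMap ℚ K b ≠ 0 := by
      simpa using fun hh => hb ((algebraMap ℚ K).injective (by simpa using hh))
    rw [map_div₀, div_eq_iff hbK, map_neg]
    linear_combination -h

lemma conj_exists (hα : α ^ 2 = -(p : K)) (hgen : Algebra.adjoin ℚ ({α} : Set K) = ⊤) :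
    ∃ σ : K →ₐ[ℚ] K, σ α = -α := by
  have hint : IsIntegral ℚ α := IsIntegral.of_finite ℚ α
  let pb0 := Algebra.adjoin.powerBasis hint
  let e : Algebra.adjoin ℚ ({α} : Set K) ≃ₐ[ℚ] K :=
    (Subalgebra.equivOfEq _ ⊤ hgen).trans Subalgebra.topEquiv
  let pb := pb0.map e
  have hgenpb : pb.gen = α := rfl
  have hy : Polynomial.aeval (-α) (minpoly ℚ pb.gen) = 0 := by
    rw [hgenpb, minpoly_alpha p K α hα]
    simp [hα]
  refine ⟨pb.lift (-α) hy, ?_⟩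
  have := pb.lift_gen (-α) hy
  rwa [hgenpb] at this

lemma rat_int_of_integral (q : ℚ) (h : IsIntegral ℤ (algebraMap ℚ K q)) : ∃ n : ℤ, (n : ℚ) = q := by
  have h2 : IsIntegral ℤ q := by
    rwa [isIntegral_algebraMap_iff (algebraMap ℚ K).injective] at h
  exact IsIntegrallyClosed.isIntegral_iff.mp h2

set_option maxHeartbeats 1000000 in
lemma units_pm_one (hp : 3 < p) (hα : α ^ 2 = -(p : K))
    (hgen : Algebra.adjoin ℚ ({α} : Set K) = ⊤) (u : 𝓞 K) (hu : IsUnit u) :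
    u = 1 ∨ u = -1 := by
  obtain ⟨σ, hσ⟩ := conj_exists p K α hα hgen
  set A := algebraMap ℚ K with hA
  let σO : 𝓞 K →+* 𝓞 K := RingOfIntegers.mapRingHom σ
  obtain ⟨a, b, hab⟩ := repr_exists p K α hgen hα (u : K)
  have hσu : ((σO u : 𝓞 K) : K) = A a - A b * α := by
    show σ (u : K) = A a - A b * α
    rw [hab, map_add, map_mul, hσ, AlgHom.commutes, AlgHom.commutes]
    ring
  rw [RingOfIntegers.coe_eq_algebraMap] at hab hσu
  -- N = u * conj u is a unit equal to A (a^2+p*b^2)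
  have hNu : IsUnit (u * σO u) := hu.mul (hu.map σO)
  have hNval : ((u * σO u : 𝓞 K) : K) = A (a ^ 2 + p * b ^ 2) := by
    rw [RingOfIntegers.coe_eq_algebraMap, map_mul, hab, hσu]
    simp only [hA, map_add, map_mul, map_pow, map_natCast, map_ofNat]
    push_cast
    linear_combination (-(algebraMap ℚ K b)^2) * hα
  set q : ℚ := a ^ 2 + p * b ^ 2 with hq
  obtain ⟨m, hm⟩ := rat_int_of_integral K q (hNval ▸ (u * σO u).2)
  obtain ⟨w, hw⟩ := hNu.exists_right_inv
  have h1 : A q * ((w : 𝓞 K) : K) = 1 := by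
    have h2 := congrArg (algebraMap (𝓞 K) K) hw
    rw [map_mul, map_one] at h2
    rw [← hNval]
    exact h2
  have hq0 : q ≠ 0 := by
    intro h0
    rw [h0, map_zero, zero_mul] at h1
    exact zero_ne_one h1
  have hwval : (w : K) = A q⁻¹ := by
    rw [map_inv₀]
    exact (inv_eq_of_mul_eq_one_right h1).symm
  obtain ⟨m', hm'⟩ := rat_int_of_integral K q⁻¹ (hwval ▸ w.2)
  have hmm' : m * m' = 1 := by
    have : ((m * m' : ℤ) : ℚ) = 1 := by push_cast [hm, hm']; field_simp
    exact_mod_cast this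
  have hq1 : q = 1 := by
    have hqpos : 0 < q := by
      rcases lt_or_eq_of_le (show (0:ℚ) ≤ q from by positivity) with h | h
      · exact h
      · exact absurd h.symm hq0
    have hm1 : m = 1 := by
      have hmpos : 0 < m := by
        have : (0:ℚ) < (m:ℚ) := hm ▸ hqpos
        exact_mod_cast this
      rcases Int.isUnit_iff.mp (IsUnit.of_mul_eq_one _ hmm') with h | h
      · exact h
      · omega
    rw [← hm, hm1, Int.cast_one]
  -- trace-like quantities
  have htr : ((u + σO u : 𝓞 K) : K) = A (2 * a) := by
    rw [RingOfIntegers.coe_eq_algebraMap, map_add, hab, hσu]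
    simp only [hA, map_add, map_mul, map_pow, map_natCast, map_ofNat]
    push_cast
    ring
  obtain ⟨m2, hm2⟩ := rat_int_of_integral K (2 * a) (htr ▸ (u + σO u).2)
  have hαint : IsIntegral ℤ α := by
    refine ⟨Polynomial.X ^ 2 + Polynomial.C (p : ℤ), Polynomial.monic_X_pow_add_C _ (by norm_num), ?_⟩
    simp [hα]
  let a0 : 𝓞 K := ⟨α, hαint⟩
  have ha0 : (algebraMap (𝓞 K) K) a0 = α := rfl
  have hti : ((a0 * (u - σO u) : 𝓞 K) : K) = A (-(2 * p * b)) := by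
    rw [RingOfIntegers.coe_eq_algebraMap, map_mul, map_sub, ha0]
    rw [hab, hσu]
    simp only [hA, map_neg, map_mul, map_natCast, map_ofNat]
    linear_combination (2 * algebraMap ℚ K b) * hα
  obtain ⟨n, hn⟩ := rat_int_of_integral K (-(2 * p * b))
    (hti ▸ (a0 * (u - σO u)).2)
  -- key integer equation
  have hkey : (p : ℤ) * m2 ^ 2 + n ^ 2 = 4 * p := by
    have hQ : (p : ℚ) * (m2:ℚ) ^ 2 + (n:ℚ) ^ 2 = 4 * p := by
      rw [hm2, hn]
      have : a ^ 2 + p * b ^ 2 = 1 := hq1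
      nlinarith [this]
    exact_mod_cast hQ
  have hpZ : Prime (p : ℤ) := Nat.prime_iff_prime_int.mp (Fact.out : p.Prime)
  have hdvd : (p : ℤ) ∣ n ^ 2 := ⟨4 - m2 ^ 2, by linarith⟩
  obtain ⟨t, ht⟩ := hpZ.dvd_of_dvd_pow hdvd
  have hp5 : 5 ≤ p := by
    have h4 : p ≠ 4 := by
      intro h
      have hpr := (Fact.out : p.Prime)
      rw [h] at hpr
      norm_num at hpr
    omega
  have hp5' : (5 : ℤ) ≤ p := by exact_mod_cast hp5
  have hp0' : (p : ℤ) ≠ 0 := by omega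
  have h5 : m2 ^ 2 + (p:ℤ) * t ^ 2 = 4 := by
    apply mul_left_cancel₀ hp0'
    rw [ht] at hkey
    nlinarith [hkey]
  have ht0 : t = 0 := by
    by_contra htne
    have h1t : 1 ≤ t ^ 2 := by
      have h2t := Int.one_le_abs (by exact_mod_cast htne)
      nlinarith [abs_nonneg t, sq_abs t]
    have h6 : (p:ℤ) * 1 ≤ (p:ℤ) * t ^ 2 :=
      mul_le_mul_of_nonneg_left h1t (by linarith)
    have h7 : 0 ≤ m2 ^ 2 := sq_nonneg m2
    linarith
  have hn0 : n = 0 := by rw [ht, ht0, mul_zero]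
  have hb0 : b = 0 := by
    have h2 : -(2 * (p:ℚ) * b) = 0 := by rw [← hn, hn0]; norm_num
    have h3 := neg_eq_zero.mp h2
    rcases mul_eq_zero.mp h3 with h | h
    · exfalso
      have hp0 : (0:ℚ) < p := by exact_mod_cast (Fact.out : p.Prime).pos
      nlinarith
    · exact h
  have ha1 : a = 1 ∨ a = -1 := by
    have : a ^ 2 = 1 := by rw [hq, hb0] at hq1; linarith [hq1]
    have h2 : (a - 1) * (a + 1) = 0 := by ring_nf; linarith [this]
    rcases mul_eq_zero.mp h2 with h | h
    · left; linarith
    · right; linarith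
  rcases ha1 with h | h
  · left
    apply RingOfIntegers.eq_iff.mp
    rw [RingOfIntegers.coe_eq_algebraMap, hab, h, hb0]
    simp
  · right
    apply RingOfIntegers.eq_iff.mp
    rw [RingOfIntegers.coe_eq_algebraMap, hab, h, hb0]
    simp

lemma finrank_two (hα : α ^ 2 = -(p : K)) (hgen : Algebra.adjoin ℚ ({α} : Set K) = ⊤) :
    Module.finrank ℚ K = 2 := by
  have hint : IsIntegral ℚ α := IsIntegral.of_finite ℚ α
  let pb0 := Algebra.adjoin.powerBasis hint
  let e : Algebra.adjoin ℚ ({α} : Set K) ≃ₐ[ℚ] K :=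
    (Subalgebra.equivOfEq _ ⊤ hgen).trans Subalgebra.topEquiv
  let pb := pb0.map e
  rw [pb.finrank]
  show (minpoly ℚ α).natDegree = 2
  rw [minpoly_alpha p K α hα]
  exact Polynomial.natDegree_X_pow_add_C

lemma absNorm_span_alphaO (hα : α ^ 2 = -(p : K))
    (hgen : Algebra.adjoin ℚ ({α} : Set K) = ⊤)
    (αO : 𝓞 K) (hαO : (αO : K) = α) :
    Ideal.absNorm (Ideal.span {αO}) = p := by
  have hsq : αO ^ 2 = -(p : 𝓞 K) := by
    apply RingOfIntegers.eq_iff.mp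
    push_cast [hαO]
    exact hα
  have hspan : (Ideal.span {αO}) ^ 2 = Ideal.span {(p : 𝓞 K)} := by
    rw [Ideal.span_singleton_pow, hsq, ← Ideal.span_singleton_neg, neg_neg]
  have h1 : Ideal.absNorm (Ideal.span {αO}) ^ 2 = p ^ 2 := by
    rw [← map_pow, hspan, Ideal.absNorm_span_singleton]
    have : (p : 𝓞 K) = algebraMap ℤ (𝓞 K) (p : ℤ) := by push_cast; rfl
    rw [this, Algebra.norm_algebraMap_of_basis (NumberField.RingOfIntegers.basis K)]
    have hcard : Fintype.card (Module.Free.ChooseBasisIndex ℤ (𝓞 K)) = 2 := by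
      rw [← Module.finrank_eq_card_chooseBasisIndex, RingOfIntegers.rank,
        finrank_two p K α hα hgen]
    rw [hcard]
    simp [Int.natAbs_pow]
  exact Nat.pow_left_injective (by norm_num) h1

lemma span_alphaO_maximal (hα : α ^ 2 = -(p : K))
    (hgen : Algebra.adjoin ℚ ({α} : Set K) = ⊤)
    (αO : 𝓞 K) (hαO : (αO : K) = α) :
    (Ideal.span {αO}).IsMaximal := by
  have hprime : (Ideal.span {αO}).IsPrime := by
    apply Ideal.isPrime_of_irreducible_absNorm
    rw [absNorm_span_alphaO p K α hα hgen αO hαO]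
    exact (Fact.out : p.Prime)
  apply hprime.isMaximal
  intro hbot
  have hα0 : αO = 0 := by
    rwa [Ideal.span_singleton_eq_bot] at hbot
  have : α = 0 := by rw [← hαO, hα0]; simp
  rw [this] at hα
  have : (p : K) = 0 := by simpa using hα.symm
  have : (p : ℕ) = 0 := by exact_mod_cast this
  exact (Fact.out : p.Prime).pos.ne' this

set_option synthInstance.maxHeartbeats 1000000 in
set_option maxHeartbeats 1000000 in
/-- Let `p > 3` be a prime with `p ≡ 3 (mod 4)`, `k = ℚ(√-p)` (formalized as a number field `K`
generated over `ℚ` by a square root `α` of `-p`, with `α` an algebraic integer `αO` of `K`),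
`𝒪` the ring of integers of `k`, and `h` the class number of `k`. Then for every nonzero ideal
`𝔞` of `𝒪` coprime to `p`, the ideal `𝔞^h` is principal, and among its generators there is
exactly one `β` whose image in the residue field `𝒪/(√-p) ≅ 𝔽_p` is a nonzero square. -/
theorem pow_classNumber_principal_unique_generator (p : ℕ) [Fact p.Prime]
    (hp4 : p % 4 = 3) (hp : 3 < p)
    (K : Type) [Field K] [NumberField K] (α : K)
    (hα : α ^ 2 = -(p : K)) (hgen : Algebra.adjoin ℚ ({α} : Set K) = ⊤)
    (αO : NumberField.RingOfIntegers K) (hαO : (αO : K) = α)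
    (I : Ideal (NumberField.RingOfIntegers K)) (hI : I ≠ ⊥)
    (hcop : IsCoprime I (Ideal.span {(p : NumberField.RingOfIntegers K)})) :
    (I ^ NumberField.classNumber K).IsPrincipal ∧
    ∃! β : NumberField.RingOfIntegers K,
      Ideal.span {β} = I ^ NumberField.classNumber K ∧
      Ideal.Quotient.mk (Ideal.span {αO}) β ≠ 0 ∧
      ∃ γ : NumberField.RingOfIntegers K ⧸ Ideal.span {αO},
        Ideal.Quotient.mk (Ideal.span {αO}) β = γ ^ 2 := by
  classical
  have hmax := span_alphaO_maximal p K α hα hgen αO hαO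
  haveI : (Ideal.span {αO}).IsMaximal := hmax
  set M : Ideal (𝓞 K) := Ideal.span {αO} with hMdef
  letI : Field ((𝓞 K) ⧸ M) := Ideal.Quotient.field M
  have hcardQ : Nat.card ((𝓞 K) ⧸ M) = p := by
    have := absNorm_span_alphaO p K α hα hgen αO hαO
    rwa [Ideal.absNorm_apply, Submodule.cardQuot_apply] at this
  haveI : Finite ((𝓞 K) ⧸ M) :=
    Nat.finite_of_card_ne_zero (by rw [hcardQ]; exact (Fact.out : p.Prime).pos.ne')
  haveI : Fintype ((𝓞 K) ⧸ M) := Fintype.ofFinite _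
  have hcard4 : Fintype.card ((𝓞 K) ⧸ M) % 4 = 3 := by
    rw [← Nat.card_eq_fintype_card, hcardQ]; exact hp4
  -- principality
  have hInz : I ∈ (Ideal (𝓞 K))⁰ := mem_nonZeroDivisors_iff_ne_zero.mpr hI
  have h1 : (ClassGroup.mk0 (⟨I, hInz⟩ : (Ideal (𝓞 K))⁰)) ^ NumberField.classNumber K = 1 :=
    pow_card_eq_one
  have hmemPow : I ^ NumberField.classNumber K ∈ (Ideal (𝓞 K))⁰ :=
    pow_mem hInz _
  have hprinc : (I ^ NumberField.classNumber K).IsPrincipal := by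
    rw [← ClassGroup.mk0_eq_one_iff hmemPow]
    rw [show (⟨I ^ NumberField.classNumber K, hmemPow⟩ : (Ideal (𝓞 K))⁰)
        = (⟨I, hInz⟩ : (Ideal (𝓞 K))⁰) ^ NumberField.classNumber K from rfl, map_pow]
    exact h1
  refine ⟨hprinc, ?_⟩
  -- coprimality
  have hpmem : (p : 𝓞 K) ∈ M := by
    have hsq : αO ^ 2 = -(p : 𝓞 K) := by
      apply RingOfIntegers.eq_iff.mp
      push_cast [hαO]
      exact hα
    have : (p : 𝓞 K) = αO * (-αO) := by rw [mul_neg, ← sq, hsq, neg_neg]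
    rw [hMdef, this]
    exact Ideal.mul_mem_right _ _ (Ideal.subset_span rfl)
  have hcopM : IsCoprime I M := by
    rw [Ideal.isCoprime_iff_sup_eq]
    rw [Ideal.isCoprime_iff_sup_eq] at hcop
    have h2 : I ⊔ Ideal.span {(p : 𝓞 K)} ≤ I ⊔ M :=
      sup_le_sup_left (Ideal.span_le.mpr (by simpa using hpmem)) I
    exact top_le_iff.mp (hcop ▸ h2)
  have hcopPow : IsCoprime (I ^ NumberField.classNumber K) M := hcopM.pow_left
  have hβne : ∀ β : 𝓞 K, Ideal.span {β} = I ^ NumberField.classNumber K →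
      Ideal.Quotient.mk M β ≠ 0 := by
    intro β hβ h0
    rw [Ideal.Quotient.eq_zero_iff_mem] at h0
    have hle : I ^ NumberField.classNumber K ≤ M := by
      rw [← hβ]
      exact Ideal.span_le.mpr (by simpa using h0)
    have : M = ⊤ := by
      have := hcopPow.sup_eq
      rwa [sup_eq_right.mpr hle] at this
    exact hmax.ne_top this
  have hdich : ∀ x : (𝓞 K) ⧸ M, x ≠ 0 → (IsSquare x ↔ ¬ IsSquare (-x)) :=
    fun x hx => sq_dichotomy _ hcard4 x hx
  obtain ⟨β₀, hβ₀⟩ := hprinc.principal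
  have hspan₀ : Ideal.span {β₀} = I ^ NumberField.classNumber K := hβ₀.symm
  have hx₀ : Ideal.Quotient.mk M β₀ ≠ 0 := hβne β₀ hspan₀
  -- choose the right sign
  obtain ⟨β, hspanβ, hsqβ⟩ :
      ∃ β : 𝓞 K, Ideal.span {β} = I ^ NumberField.classNumber K ∧
        IsSquare (Ideal.Quotient.mk M β) := by
    by_cases hsq : IsSquare (Ideal.Quotient.mk M β₀)
    · exact ⟨β₀, hspan₀, hsq⟩
    · refine ⟨-β₀, by rw [Ideal.span_singleton_neg]; exact hspan₀, ?_⟩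
      rw [map_neg]
      by_contra hns
      exact hsq (((hdich _ hx₀).mpr hns))
  have hxβ : Ideal.Quotient.mk M β ≠ 0 := hβne β hspanβ
  have hnsqβ : ¬ IsSquare (-(Ideal.Quotient.mk M β)) := (hdich _ hxβ).mp hsqβ
  refine ⟨β, ⟨hspanβ, hxβ, ?_⟩, ?_⟩
  · obtain ⟨r, hr⟩ := hsqβ
    exact ⟨r, by rw [hr, sq]⟩
  · rintro β' ⟨hspan', hx', γ', hγ'⟩
    have hassoc : Associated β' β := by
      rw [← Ideal.span_singleton_eq_span_singleton]
      rw [hspan', hspanβ]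
    obtain ⟨u, hu⟩ := hassoc
    rcases units_pm_one p K α hp hα hgen (u : 𝓞 K) u.isUnit with h | h
    · rw [← hu, h, mul_one]
    · exfalso
      have hββ' : β = -β' := by rw [← hu, h]; ring
      apply hnsqβ
      have : -(Ideal.Quotient.mk M β) = Ideal.Quotient.mk M β' := by
        rw [hββ', map_neg, neg_neg]
      rw [this, hγ']
      exact ⟨γ', by rw [sq]⟩
end
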